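/- arXiv:2506.16992 — 9 statements merged into one kernel-verified Lean document; each statement's English description precedes it below -/
import Mathlib

section
/- Let (V,H) be a finite-dimensional complex Hermitian space, ι : W ↪ V an injective linear map, and Φ : W × V → ℂ a sesquilinear map. Extend H to a Hermitian form G on V ⊕ W by G(v'+w', v+w) = H(v',v) + Φ(w',v) + conj(Φ(w,v')). Assume that the restriction of Φ to W × ιW is nondegenerate. Then the projection V ⊕ W → V induces an isometry of Hermitian spaces from ((ιW ⊕ W)^⊥_G, G) onto (W^⊥_Φ, H), where W^⊥_Φ = {v ∈ V : Φ(w,v)=0 for all w ∈ W}. Moreover, G is nondegenerate on V ⊕ W if and only if H restricted to W^⊥_Φ × W^⊥_Φ is nondegenerate. -/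
open Module

section Aux

variable {V W : Type*} [AddCommGroup V] [Module ℂ V]
  [AddCommGroup W] [Module ℂ W] [FiniteDimensional ℂ W]

lemma aux_surj (T : W →ₗ[ℂ] (Fin (Module.finrank ℂ W) → ℂ))
    (hT : Function.Injective T) : Function.Surjective T := by
  refine (LinearMap.injective_iff_surjective_of_finrank_eq_finrank ?_).mp hT
  simp

lemma aux_key1 (Φ : W →ₗ⋆[ℂ] V →ₗ[ℂ] ℂ) (ι : W →ₗ[ℂ] V)
    (hΦl : ∀ w : W, (∀ y : W, Φ w (ι y) = 0) → w = 0)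
    (f : W →ₗ[ℂ] ℂ) : ∃ y : W, ∀ w : W, Φ y (ι w) = f w := by
  set b := Module.finBasis ℂ W
  obtain ⟨T, hTapp⟩ : ∃ T : W →ₗ[ℂ] (Fin (Module.finrank ℂ W) → ℂ),
      ∀ z i, T z i = (starRingEnd ℂ) (Φ z (ι (b i))) :=
    ⟨{ toFun := fun y i => (starRingEnd ℂ) (Φ y (ι (b i)))
       map_add' := fun y z => by funext i; simp
       map_smul' := fun c y => by funext i; simp [Φ.map_smulₛₗ] },
     fun _ _ => rfl⟩
  have hinj : Function.Injective T := by
    intro y1 y2 h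
    rw [← sub_eq_zero]
    apply hΦl
    have h0 : T (y1 - y2) = 0 := by rw [map_sub, h, sub_self]
    have h1 : ∀ i, Φ (y1 - y2) (ι (b i)) = 0 := by
      intro i
      have h2 : (starRingEnd ℂ) (Φ (y1 - y2) (ι (b i))) = 0 := by
        rw [← hTapp]; exact congrFun h0 i
      exact (starRingEnd ℂ).injective (by rw [map_zero]; exact h2)
    have h2 : (Φ (y1 - y2)).comp ι = 0 := b.ext fun i => by simpa using h1 i
    intro w
    simpa using DFunLike.congr_fun h2 w
  obtain ⟨y, hy⟩ := aux_surj T hinj fun i => (starRingEnd ℂ) (f (b i))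
  have h3 : ∀ i, Φ y (ι (b i)) = f (b i) := fun i =>
    (starRingEnd ℂ).injective (by rw [← hTapp]; exact congrFun hy i)
  have h4 : (Φ y).comp ι = f := b.ext fun i => by simpa using h3 i
  exact ⟨y, fun w => by simpa using DFunLike.congr_fun h4 w⟩

lemma aux_key2 (Φ : W →ₗ⋆[ℂ] V →ₗ[ℂ] ℂ) (ι : W →ₗ[ℂ] V)
    (hΦr : ∀ y : W, (∀ w : W, Φ w (ι y) = 0) → y = 0)
    (u : V) : ∃ w₀ : W, ∀ w : W, Φ w (ι w₀) = Φ w u := by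
  set b := Module.finBasis ℂ W
  set T : W →ₗ[ℂ] (Fin (Module.finrank ℂ W) → ℂ) :=
    LinearMap.pi fun i => (Φ (b i)).comp ι with hT
  have hinj : Function.Injective T := by
    intro y1 y2 h
    rw [← sub_eq_zero]
    apply hΦr
    have h0 : T (y1 - y2) = 0 := by rw [map_sub, h, sub_self]
    have h1 : ∀ i, Φ (b i) (ι (y1 - y2)) = 0 := by
      intro i
      simpa [hT] using congrFun h0 i
    have h2 : Φ.flip (ι (y1 - y2)) = 0 := b.ext fun i => by simpa using h1 i
    intro w
    simpa using DFunLike.congr_fun h2 w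
  obtain ⟨w₀, hw₀⟩ := aux_surj T hinj (fun i => Φ (b i) u)
  have h3 : Φ.flip (ι w₀) = Φ.flip u := b.ext fun i => by
    simpa [hT] using congrFun hw₀ i
  exact ⟨w₀, fun w => by simpa using DFunLike.congr_fun h3 w⟩

end Aux



/-- Lemma `l.trivial`: extend a Hermitian form `H` on `V` to the Hermitian
form `G = [[H, Φ*],[Φ, 0]]` on `V ⊕ W` using a sesquilinear pairing `Φ : W × V → ℂ`.
If `Φ|_{W × ιW}` is nondegenerate, then the projection `V ⊕ W → V` induces an isometry
`((ιW ⊕ W)^⊥_G, G) ≃ (W^⊥_Φ, H)`, and `G` is nondegenerate iff `H` is nondegenerate on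
`W^⊥_Φ`. -/
theorem stmt_3 {V W : Type*} [AddCommGroup V] [Module ℂ V] [FiniteDimensional ℂ V]
    [AddCommGroup W] [Module ℂ W] [FiniteDimensional ℂ W]
    (H : V →ₗ⋆[ℂ] V →ₗ[ℂ] ℂ) (hHerm : H.IsSymm)
    (ι : W →ₗ[ℂ] V) (hι : Function.Injective ι)
    (Φ : W →ₗ⋆[ℂ] V →ₗ[ℂ] ℂ)
    (G : V × W → V × W → ℂ)
    (hG : ∀ x y : V × W, G x y = H x.1 y.1 + Φ x.2 y.1 + (starRingEnd ℂ) (Φ y.2 x.1))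
    (hΦl : ∀ w : W, (∀ y : W, Φ w (ι y) = 0) → w = 0)
    (hΦr : ∀ y : W, (∀ w : W, Φ w (ι y) = 0) → y = 0) :
    -- the projection maps (ιW ⊕ W)^⊥_G into W^⊥_Φ …
    (∀ x : V × W, (∀ w w' : W, G (ι w, w') x = 0) → (∀ w : W, Φ w x.1 = 0)) ∧
    -- … bijectively …
    (∀ v : V, (∀ w : W, Φ w v = 0) →
      ∃! x : V × W, (∀ w w' : W, G (ι w, w') x = 0) ∧ x.1 = v) ∧
    -- … and isometrically …
    (∀ x y : V × W, (∀ w w' : W, G (ι w, w') x = 0) → (∀ w w' : W, G (ι w, w') y = 0) →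
      G x y = H x.1 y.1) ∧
    -- … and G is nondegenerate iff H is nondegenerate on W^⊥_Φ.
    ((∀ x : V × W, (∀ y : V × W, G y x = 0) → x = 0) ↔
      (∀ v : V, (∀ w : W, Φ w v = 0) →
        (∀ u : V, (∀ w : W, Φ w u = 0) → H u v = 0) → v = 0)) := by
  have proj : ∀ x : V × W, (∀ w w' : W, G (ι w, w') x = 0) → (∀ w : W, Φ w x.1 = 0) := by
    intro x hx w
    have := hx 0 w
    rw [hG] at this
    simpa using this
  refine ⟨proj, ?_, ?_, ?_⟩
  · -- bijectivity
    intro v hv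
    obtain ⟨y, hy⟩ := aux_key1 Φ ι hΦl (-((H v).comp ι))
    simp only [LinearMap.neg_apply, LinearMap.comp_apply] at hy
    refine ⟨(v, y), ⟨?_, rfl⟩, ?_⟩
    · intro w w'
      rw [hG]
      simp only
      rw [hv w', hy w, map_neg, hHerm.eq v (ι w)]
      ring
    · rintro ⟨v', y'⟩ ⟨hP', rfl⟩
      have hyy : ∀ w, Φ (y' - y) (ι w) = 0 := by
        intro w
        have h1 := hP' w 0
        rw [hG] at h1
        simp only [map_zero, LinearMap.zero_apply, add_zero] at h1
        have e1 : (starRingEnd ℂ) (Φ y (ι w)) = - H (ι w) (v', y').1 := by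
          rw [hy w, map_neg, hHerm.eq (v', y').1 (ι w)]
        have e2 : (starRingEnd ℂ) (Φ y' (ι w)) = - H (ι w) (v', y').1 := by
          linear_combination h1
        have h4 : Φ y' (ι w) = Φ y (ι w) :=
          (starRingEnd ℂ).injective (e2.trans e1.symm)
        rw [map_sub, LinearMap.sub_apply, h4, sub_self]
      have : y' - y = 0 := hΦl _ hyy
      have : y' = y := by rwa [sub_eq_zero] at this
      simp [this]
  · -- isometry
    intro x y hx hy
    rw [hG, proj y hy x.2, proj x hx y.2]
    simp
  · constructor
    · intro hGnd v hv hH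
      obtain ⟨y, hy⟩ := aux_key1 Φ ι hΦl (-((H v).comp ι))
      simp only [LinearMap.neg_apply, LinearMap.comp_apply] at hy
      have h0 : (v, y) = (0 : V × W) := by
        apply hGnd
        rintro ⟨u, w⟩
        rw [hG]
        simp only
        obtain ⟨w₀, hw₀⟩ := aux_key2 Φ ι hΦr u
        have hu' : ∀ w', Φ w' (u - ι w₀) = 0 := by
          intro w'
          rw [map_sub, hw₀ w', sub_self]
        have hu : u = ι w₀ + (u - ι w₀) := by abel
        rw [hv w]
        rw [hu, map_add, LinearMap.add_apply, map_add]
        rw [hH (u - ι w₀) hu', hu' y, hy w₀]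
        simp only [add_zero, map_add, map_neg, map_zero]
        rw [hHerm.eq v (ι w₀)]
        ring
      have := congrArg Prod.fst h0
      simpa using this
    · intro hHnd x hx
      obtain ⟨v, y⟩ := x
      have hv : ∀ w, Φ w v = 0 := by
        intro w
        have := hx (0, w)
        rw [hG] at this
        simpa using this
      have h2 : ∀ u, H u v + (starRingEnd ℂ) (Φ y u) = 0 := by
        intro u
        have := hx (u, 0)
        rw [hG] at this
        simpa using this
      have hv0 : v = 0 := by
        apply hHnd v hv
        intro u hu
        have := h2 u
        rw [hu y, map_zero, add_zero] at this
        exact this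
      have hy0 : y = 0 := by
        apply hΦl
        intro w
        have := h2 (ι w)
        rw [hv0, map_zero, zero_add] at this
        simpa using this
      simp [hv0, hy0]
end

section
/- Let (V,H) be a finite-dimensional complex Hermitian space, ι : W ↪ V injective linear, and Φ : W × V → ℂ sesquilinear; form the extended Hermitian form G = [[H, Φ*],[Φ, 0]] on V ⊕ W. Assume H is negative definite on ιW. Then: H is positive semidefinite on W^⊥_Φ if and only if (G is positive semidefinite on (ιW)^⊥_G and Φ restricted to W × ιW is nondegenerate). Likewise, H is positive definite on W^⊥_Φ if and only if G is positive definite on (ιW)^⊥_G. -/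
/-- Lemma `l.block`, equivalences (b)⇔(c) and (b₊)⇔(c₊): with
`G = [[H, Φ*],[Φ, 0]]` on `V ⊕ W` and `H` negative definite on `ιW`:
`H` is positive semidefinite on `W^⊥_Φ` iff `G` is positive semidefinite on `(ιW)^⊥_G`
and `Φ|_{W × ιW}` is nondegenerate; and `H` is positive definite on `W^⊥_Φ` iff `G` is
positive definite on `(ιW)^⊥_G`. -/
theorem stmt_4 {V W : Type*} [AddCommGroup V] [Module ℂ V] [FiniteDimensional ℂ V]
    [AddCommGroup W] [Module ℂ W] [FiniteDimensional ℂ W]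
    (H : V →ₗ⋆[ℂ] V →ₗ[ℂ] ℂ) (hHerm : H.IsSymm)
    (ι : W →ₗ[ℂ] V) (hι : Function.Injective ι)
    (Φ : W →ₗ⋆[ℂ] V →ₗ[ℂ] ℂ)
    (G : V × W → V × W → ℂ)
    (hG : ∀ x y : V × W, G x y = H x.1 y.1 + Φ x.2 y.1 + (starRingEnd ℂ) (Φ y.2 x.1))
    (hnegdef : ∀ x : W, x ≠ 0 → (H (ι x) (ι x)).re < 0) :
    ((∀ v : V, (∀ w : W, Φ w v = 0) → 0 ≤ (H v v).re) ↔
      ((∀ x : V × W, (∀ w : W, G (ι w, 0) x = 0) → 0 ≤ (G x x).re) ∧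
        (∀ w : W, (∀ y : W, Φ w (ι y) = 0) → w = 0) ∧
        (∀ y : W, (∀ w : W, Φ w (ι y) = 0) → y = 0))) ∧
    ((∀ v : V, (∀ w : W, Φ w v = 0) → v ≠ 0 → 0 < (H v v).re) ↔
      (∀ x : V × W, (∀ w : W, G (ι w, 0) x = 0) → x ≠ 0 → 0 < (G x x).re)) := by
  classical
  set n := Module.finrank ℂ W with hn
  let b : Module.Basis (Fin n) ℂ W := Module.finBasis ℂ W
  -- If Φ vanishes at basis vectors (first slot), it vanishes for all w.
  have spanΦ : ∀ x : V, (∀ i, Φ (b i) x = 0) → ∀ w : W, Φ w x = 0 := by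
    intro x hx w
    have h0 : Φ.flip x = 0 := b.ext fun i => by simpa using hx i
    have h1 : Φ.flip x w = (0 : W →ₗ⋆[ℂ] ℂ) w := by rw [h0]
    simpa using h1
  have spanι : ∀ w₀ : W, (∀ i, Φ w₀ (ι (b i)) = 0) → ∀ y : W, Φ w₀ (ι y) = 0 := by
    intro w₀ h y
    have h0 : (Φ w₀).comp ι = 0 := b.ext fun i => by simpa using h i
    have h1 := LinearMap.congr_fun h0 y
    simpa using h1
  have expand : ∀ (w₀ : W) (x : V),
      Φ w₀ x = ∑ i, (starRingEnd ℂ) (b.repr w₀ i) * Φ (b i) x := by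
    intro w₀ x
    conv_lhs => rw [← b.sum_repr w₀]
    rw [map_sum, LinearMap.sum_apply]
    refine Finset.sum_congr rfl fun i _ => ?_
    rw [LinearMap.map_smulₛₗ, LinearMap.smul_apply, smul_eq_mul]
  let T : V →ₗ[ℂ] (Fin n → ℂ) := LinearMap.pi fun i => Φ (b i)
  have hKmem : ∀ v : V, v ∈ LinearMap.ker T ↔ ∀ w, Φ w v = 0 := by
    intro v
    rw [LinearMap.mem_ker]
    constructor
    · intro hv w
      exact spanΦ v (fun i => congrFun hv i) w
    · intro hv
      exact funext fun i => hv (b i)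
  have negsemi : ∀ u : W, (H (ι u) (ι u)).re ≤ 0 := by
    intro u
    rcases eq_or_ne u 0 with rfl | h
    · simp
    · exact (hnegdef u h).le
  have hmeet : (∀ v : V, (∀ w : W, Φ w v = 0) → 0 ≤ (H v v).re) →
      ∀ y : W, (∀ w : W, Φ w (ι y) = 0) → y = 0 := by
    intro hb y hy
    by_contra h0
    exact absurd (hb (ι y) hy) (not_le.mpr (hnegdef y h0))
  -- left nondegeneracy from (b)
  have hleft : (∀ v : V, (∀ w : W, Φ w v = 0) → 0 ≤ (H v v).re) →
      ∀ w₀ : W, (∀ y : W, Φ w₀ (ι y) = 0) → w₀ = 0 := by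
    intro hb w₀ h0
    have hinj : Function.Injective (T.comp ι) := by
      rw [← LinearMap.ker_eq_bot, Submodule.eq_bot_iff]
      intro y hy
      have hy' : T (ι y) = 0 := hy
      exact hmeet hb y ((hKmem (ι y)).mp hy')
    have hsurj : Function.Surjective (T.comp ι) :=
      (LinearMap.injective_iff_surjective_of_finrank_eq_finrank (by simp [hn])).mp hinj
    obtain ⟨y, hy⟩ := hsurj fun i => b.repr w₀ i
    have h1 : (0 : ℂ) = ∑ i, ((Complex.normSq (b.repr w₀ i) : ℝ) : ℂ) := by
      rw [← h0 y, expand w₀ (ι y)]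
      refine Finset.sum_congr rfl fun i _ => ?_
      have h2 : Φ (b i) (ι y) = b.repr w₀ i := congrFun hy i
      rw [h2, mul_comm, Complex.mul_conj]
    have h3 : (0 : ℝ) = ∑ i, Complex.normSq (b.repr w₀ i) := by
      have := congrArg Complex.re h1
      simpa [Complex.re_sum] using this
    have h4 : ∀ i ∈ Finset.univ, Complex.normSq (b.repr w₀ i) = 0 :=
      (Finset.sum_eq_zero_iff_of_nonneg fun i _ => Complex.normSq_nonneg _).mp h3.symm
    have h5 : ∀ i, b.repr w₀ i = 0 := fun i =>
      Complex.normSq_eq_zero.mp (h4 i (Finset.mem_univ i))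
    calc w₀ = ∑ i, b.repr w₀ i • b i := (b.sum_repr w₀).symm
      _ = 0 := by simp [h5]
  -- decomposition V = ker T ⊕ range ι from (b)
  have hsup : (∀ v : V, (∀ w : W, Φ w v = 0) → 0 ≤ (H v v).re) →
      ∀ v : V, ∃ (v₀ : V) (u : W), (∀ w, Φ w v₀ = 0) ∧ v = v₀ + ι u := by
    intro hb v
    have hinf : LinearMap.ker T ⊓ LinearMap.range ι = ⊥ := by
      rw [Submodule.eq_bot_iff]
      rintro x ⟨hx1, y, rfl⟩
      rw [hmeet hb y ((hKmem (ι y)).mp hx1)]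
      exact map_zero ι
    have h1 : Module.finrank ℂ (LinearMap.range ι) = n := LinearMap.finrank_range_of_inj hι
    have h2 := LinearMap.finrank_range_add_finrank_ker T
    have h3 : Module.finrank ℂ (LinearMap.range T) ≤ n := by
      calc Module.finrank ℂ (LinearMap.range T) ≤ Module.finrank ℂ (Fin n → ℂ) :=
            (LinearMap.range T).finrank_le
        _ = n := by simp
    have h4 := Submodule.finrank_sup_add_finrank_inf_eq (LinearMap.ker T) (LinearMap.range ι)
    rw [hinf] at h4
    simp only [finrank_bot, add_zero] at h4
    have h5 := (LinearMap.ker T ⊔ LinearMap.range ι).finrank_le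
    have htop : LinearMap.ker T ⊔ LinearMap.range ι = ⊤ :=
      Submodule.eq_top_of_finrank_eq (by omega)
    have hv : v ∈ LinearMap.ker T ⊔ LinearMap.range ι := htop ▸ Submodule.mem_top
    obtain ⟨v₀, hv₀, x, hx, rfl⟩ := Submodule.mem_sup.mp hv
    obtain ⟨u, rfl⟩ := hx
    exact ⟨v₀, u, (hKmem v₀).mp hv₀, rfl⟩
  -- key identity for G on the orthogonal complement
  have key_GH : ∀ (v₀ : V) (u w' : W), (∀ w, Φ w v₀ = 0) →
      (∀ w, G (ι w, 0) (v₀ + ι u, w') = 0) →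
      G (v₀ + ι u, w') (v₀ + ι u, w') = H v₀ v₀ - H (ι u) (ι u) := by
    intro v₀ u w' hv₀ hperp
    have hu := hperp u
    rw [hG] at hu
    simp only [map_zero, LinearMap.zero_apply, add_zero] at hu
    have hΦu : Φ w' (ι u) = - H (v₀ + ι u) (ι u) := by
      have h1 : (starRingEnd ℂ) (Φ w' (ι u)) = - H (ι u) (v₀ + ι u) := by
        linear_combination hu
      have h2 := congrArg (starRingEnd ℂ) h1
      rw [Complex.conj_conj, map_neg, hHerm.eq (ι u) (v₀ + ι u)] at h2
      exact h2
    rw [hG]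
    simp only
    have hΦv : Φ w' (v₀ + ι u) = - H (v₀ + ι u) (ι u) := by
      rw [map_add, hv₀ w', zero_add, hΦu]
    rw [hΦv, map_neg, hHerm.eq (v₀ + ι u) (ι u)]
    simp only [map_add, LinearMap.add_apply]
    ring
  -- construction of the partner w' for v ∈ W^⊥_Φ, from left nondegeneracy
  have build : ∀ (_ : ∀ w₀ : W, (∀ y : W, Φ w₀ (ι y) = 0) → w₀ = 0) (v : V),
      (∀ w, Φ w v = 0) →
      ∃ w' : W, (∀ w, G (ι w, 0) (v, w') = 0) ∧ G (v, w') (v, w') = H v v := by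
    intro hl v hv
    let S : W →ₗ[ℂ] (Fin n → ℂ) :=
      { toFun := fun w' i => (starRingEnd ℂ) (Φ w' (ι (b i)))
        map_add' := fun x y => by funext i; simp [map_add]
        map_smul' := fun c x => by
          funext i
          simp [LinearMap.map_smulₛₗ, mul_comm] }
    have Sinj : Function.Injective S := by
      rw [← LinearMap.ker_eq_bot, Submodule.eq_bot_iff]
      intro w₀ hw₀
      have h1 : ∀ i, Φ w₀ (ι (b i)) = 0 := by
        intro i
        have h2 : (starRingEnd ℂ) (Φ w₀ (ι (b i))) = 0 := congrFun (hw₀ : S w₀ = 0) i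
        simpa using h2
      exact hl w₀ (spanι w₀ h1)
    have Ssurj : Function.Surjective S :=
      (LinearMap.injective_iff_surjective_of_finrank_eq_finrank (by simp [hn])).mp Sinj
    obtain ⟨w', hw'⟩ := Ssurj fun i => (starRingEnd ℂ) (-(H v (ι (b i))))
    have hbase : ∀ i, Φ w' (ι (b i)) = -(H v (ι (b i))) := by
      intro i
      have h1 : (starRingEnd ℂ) (Φ w' (ι (b i))) = (starRingEnd ℂ) (-(H v (ι (b i)))) :=
        congrFun hw' i
      exact (starRingEnd ℂ).injective h1
    have hall : ∀ y, Φ w' (ι y) = - H v (ι y) := by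
      have h0 : (Φ w').comp ι = -((H v).comp ι) := b.ext fun i => by simpa using hbase i
      intro y
      have h1 := LinearMap.congr_fun h0 y
      simpa using h1
    refine ⟨w', ?_, ?_⟩
    · intro w
      rw [hG]
      simp only [map_zero, LinearMap.zero_apply, add_zero]
      rw [hall w, map_neg, hHerm.eq v (ι w)]
      ring
    · rw [hG]
      simp only [hv w', map_zero, add_zero]
  have hb_of_pd : (∀ v : V, (∀ w : W, Φ w v = 0) → v ≠ 0 → 0 < (H v v).re) →
      ∀ v : V, (∀ w : W, Φ w v = 0) → 0 ≤ (H v v).re := by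
    intro h v hv
    rcases eq_or_ne v 0 with rfl | h0
    · simp
    · exact (h v hv h0).le
  constructor
  · constructor
    · intro hb
      refine ⟨?_, hleft hb, hmeet hb⟩
      intro x hx
      obtain ⟨v₀, u, hv₀, hdec⟩ := hsup hb x.1
      have hx_eq : x = (v₀ + ι u, x.2) := by rw [← hdec]
      have hx' : ∀ w, G (ι w, 0) (v₀ + ι u, x.2) = 0 := fun w => hx_eq ▸ hx w
      have hxx : G x x = H v₀ v₀ - H (ι u) (ι u) := by
        rw [hx_eq]; exact key_GH v₀ u x.2 hv₀ hx'
      rw [hxx, Complex.sub_re]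
      have h1 := hb v₀ hv₀
      have h2 := negsemi u
      linarith
    · rintro ⟨hGpsd, hl, _⟩ v hv
      obtain ⟨w', hmem, hval⟩ := build hl v hv
      have h1 := hGpsd (v, w') hmem
      rwa [hval] at h1
  · constructor
    · intro hbp
      have hb := hb_of_pd hbp
      intro x hx hx0
      obtain ⟨v₀, u, hv₀, hdec⟩ := hsup hb x.1
      have hx_eq : x = (v₀ + ι u, x.2) := by rw [← hdec]
      have hx' : ∀ w, G (ι w, 0) (v₀ + ι u, x.2) = 0 := fun w => hx_eq ▸ hx w
      have hxx : G x x = H v₀ v₀ - H (ι u) (ι u) := by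
        rw [hx_eq]; exact key_GH v₀ u x.2 hv₀ hx'
      rw [hxx, Complex.sub_re]
      rcases eq_or_ne v₀ 0 with rfl | hv0
      · rcases eq_or_ne u 0 with rfl | hu0
        · exfalso
          have hx1 : x.1 = 0 := by rw [hdec]; simp
          have hΦw : ∀ y, Φ x.2 (ι y) = 0 := by
            intro y
            have h1 := hx y
            rw [hG] at h1
            simp only [hx1, map_zero, LinearMap.zero_apply, zero_add, add_zero] at h1
            have h2 := congrArg (starRingEnd ℂ) h1
            rwa [Complex.conj_conj, map_zero] at h2
          have hx2 : x.2 = 0 := hleft hb x.2 hΦw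
          apply hx0
          have : x = (x.1, x.2) := rfl
          rw [this, hx1, hx2]
          rfl
        · have h2 := hnegdef u hu0
          simp only [map_zero, LinearMap.zero_apply, Complex.zero_re]
          linarith
      · have h1 := hbp v₀ hv₀ hv0
        have h2 := negsemi u
        linarith
    · intro hcp
      have hl : ∀ w₀ : W, (∀ y : W, Φ w₀ (ι y) = 0) → w₀ = 0 := by
        intro w₀ h0
        by_contra hw0
        have hmem : ∀ w, G (ι w, 0) ((0 : V), w₀) = 0 := by
          intro w
          rw [hG]
          simp [h0 w]
        have hne : (((0 : V), w₀) : V × W) ≠ 0 := by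
          simp [Prod.ext_iff, hw0]
        have h1 := hcp _ hmem hne
        rw [hG] at h1
        simp at h1
      intro v hv hv0
      obtain ⟨w', hmem, hval⟩ := build hl v hv
      have hne : (((v, w') : V × W)) ≠ 0 := by
        simp [Prod.ext_iff, hv0]
      have h1 := hcp (v, w') hmem hne
      rwa [hval] at h1
end

section
/- Let V be a finite-dimensional complex vector space, ι : W ↪ V an injective linear map, and H_t (t in an open real interval I containing 0) a family of Hermitian forms on V such that for each t ∈ I: ιW is a nondegenerate subspace for H_t, and H_t is positive semidefinite on (ιW)^⊥_{H_t}. Suppose the derivative H'_0 = (d/dt)|_{t=0} H_t exists. Then any v₀ ∈ (ιW)^⊥_{H_0} with H_0(v₀,v₀)=0 also satisfies H'_0(v₀,v₀)=0. In particular, if H'_0 is definite (positive or negative) on (ιW)^⊥_{H_0}, then H_0 is positive definite on (ιW)^⊥_{H_0}. -/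
set_option maxRecDepth 8000

open Matrix

private lemma prod_diffAt {ι : Type*} (s : Finset ι) (g : ι → ℝ → ℂ)
    (h : ∀ i, DifferentiableAt ℝ (g i) 0) :
    DifferentiableAt ℝ (fun t => ∏ i ∈ s, g i t) 0 := by
  classical
  induction s using Finset.induction with
  | empty => simp
  | insert _ _ hx ih =>
    simp only [Finset.prod_insert hx]
    exact (h _).mul ih

private lemma det_diffAt {n : Type*} [Fintype n] [DecidableEq n] (f : ℝ → Matrix n n ℂ)
    (h : ∀ i j, DifferentiableAt ℝ (fun t => f t i j) 0) :
    DifferentiableAt ℝ (fun t => (f t).det) 0 := by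
  simp only [Matrix.det_apply']
  apply DifferentiableAt.fun_sum
  intro σ _
  exact (prod_diffAt Finset.univ _ (fun i => h (σ i) i)).const_mul _

private lemma expandR {V : Type*} [AddCommGroup V] [Module ℂ V]
    (B : V →ₗ⋆[ℂ] V →ₗ[ℂ] ℂ) {n : ℕ} (w : Fin n → ℂ) (uu : Fin n → V) (z v₀ : V) :
    B z (v₀ + ∑ j, w j • uu j) = B z v₀ + ∑ j, w j * B z (uu j) := by
  simp only [map_add, map_sum, _root_.map_smul, smul_eq_mul]

private lemma expandL {V : Type*} [AddCommGroup V] [Module ℂ V]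
    (B : V →ₗ⋆[ℂ] V →ₗ[ℂ] ℂ) {n : ℕ} (w : Fin n → ℂ) (uu : Fin n → V) (z v₀ : V) :
    B (v₀ + ∑ i, w i • uu i) z = B v₀ z + ∑ i, star (w i) * B (uu i) z := by
  simp only [map_add, map_sum, map_smulₛₗ, LinearMap.add_apply, LinearMap.sum_apply,
    LinearMap.smul_apply, smul_eq_mul, starRingEnd_apply]

private lemma key_lemma {V W : Type*} [AddCommGroup V] [Module ℂ V]
    [AddCommGroup W] [Module ℂ W] [FiniteDimensional ℂ W]
    (ι : W →ₗ[ℂ] V) (hι : Function.Injective ι)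
    (a b : ℝ) (ha : a < 0) (hb : 0 < b)
    (H : ℝ → (V →ₗ⋆[ℂ] V →ₗ[ℂ] ℂ))
    (hHerm : ∀ t ∈ Set.Ioo a b, (H t).IsSymm)
    (hnd : ∀ t ∈ Set.Ioo a b, ∀ x : W, (∀ y : W, H t (ι y) (ι x) = 0) → x = 0)
    (hsemi : ∀ t ∈ Set.Ioo a b, ∀ v : V, (∀ x : W, H t (ι x) v = 0) → 0 ≤ (H t v v).re)
    (H' : V →ₗ⋆[ℂ] V →ₗ[ℂ] ℂ)
    (hderiv : ∀ v w : V, HasDerivAt (fun t : ℝ => H t v w) (H' v w) 0)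
    (v₀ : V) (hperp : ∀ x : W, H 0 (ι x) v₀ = 0) (hzero : H 0 v₀ v₀ = 0) :
    H' v₀ v₀ = 0 := by
  classical
  have h0mem : (0:ℝ) ∈ Set.Ioo a b := ⟨ha, hb⟩
  set n := Module.finrank ℂ W with hn
  set e : Module.Basis (Fin n) ℂ W := Module.finBasis ℂ W with he
  set u : Fin n → V := fun i => ι (e i) with hu
  set G : ℝ → Matrix (Fin n) (Fin n) ℂ := fun t => Matrix.of fun i j => H t (u i) (u j) with hG
  set bv : ℝ → Fin n → ℂ := fun t i => H t (u i) v₀ with hbv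
  set d : ℝ → ℂ := fun t => (G t).det with hd
  -- expanding the first (antilinear) argument over the basis
  have expand_left : ∀ (t : ℝ) (y : W) (z : V),
      H t (ι y) z = ∑ i, (starRingEnd ℂ) (e.repr y i) * H t (u i) z := by
    intro t y z
    conv_lhs => rw [← e.sum_repr y]
    simp [map_sum, map_smulₛₗ, hu, LinearMap.sum_apply, LinearMap.smul_apply, smul_eq_mul,
      -Module.Basis.sum_repr]
  -- the Gram determinant is nonzero on the interval
  have hdet : ∀ t ∈ Set.Ioo a b, d t ≠ 0 := by
    intro t ht hdt
    obtain ⟨cvec, hcne, hmul⟩ := (Matrix.exists_mulVec_eq_zero_iff).2 hdt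
    have hbasis : ∀ i, H t (u i) (ι (∑ j, cvec j • e j)) = 0 := by
      intro i
      have h1 : H t (u i) (ι (∑ j, cvec j • e j)) = ∑ j, cvec j * H t (u i) (u j) := by
        simp [map_sum, _root_.map_smul, hu, smul_eq_mul]
      rw [h1]
      simpa [Matrix.mulVec, dotProduct, hG, mul_comm] using congrFun hmul i
    have hx : (∑ j, cvec j • e j) = 0 := by
      apply hnd t ht
      intro y
      rw [expand_left]
      simp only [hbasis, mul_zero, Finset.sum_const_zero]
    apply hcne
    have hli := Fintype.linearIndependent_iff.mp e.linearIndependent cvec hx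
    funext j; exact hli j
  -- differentiability data
  have hGdiff : ∀ i j, DifferentiableAt ℝ (fun t => G t i j) 0 := fun i j =>
    (hderiv (u i) (u j)).differentiableAt
  have hbvdiff : ∀ i, DifferentiableAt ℝ (fun t => bv t i) 0 := fun i =>
    (hderiv (u i) v₀).differentiableAt
  have hddiff : DifferentiableAt ℝ d 0 := det_diffAt G hGdiff
  have hadjdiff : ∀ i j, DifferentiableAt ℝ (fun t => (G t).adjugate i j) 0 := by
    intro i j
    simp only [Matrix.adjugate_apply]
    apply det_diffAt
    intro k l
    simp only [Matrix.updateRow_apply]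
    by_cases hk : k = j
    · simp [hk]
    · simpa [hk] using hGdiff k l
  -- the correction coefficients
  set c : ℝ → Fin n → ℂ := fun t j => -((d t)⁻¹ * ((G t).adjugate *ᵥ (bv t)) j) with hcdef
  have hcdiff : ∀ j, DifferentiableAt ℝ (fun t => c t j) 0 := by
    intro j
    apply DifferentiableAt.neg
    apply DifferentiableAt.mul
    · exact hddiff.inv (hdet 0 h0mem)
    · simp only [Matrix.mulVec, dotProduct]
      exact DifferentiableAt.fun_sum fun k _ => (hadjdiff j k).mul (hbvdiff k)
  have hbv0 : bv 0 = 0 := funext fun i => hperp (e i)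
  have hc0 : ∀ j, c 0 j = 0 := by intro j; simp [hcdef, hbv0]
  set v : ℝ → V := fun t => v₀ + ∑ j, c t j • u j with hvdef
  have hv0 : v 0 = v₀ := by simp [hvdef, hc0]
  have hvt : ∀ t, v t = v₀ + ∑ j, c t j • u j := fun t => by rw [hvdef]
  -- v t is H_t-orthogonal to ι W for all t ∈ (a,b)
  have hbase : ∀ t ∈ Set.Ioo a b, ∀ i, H t (u i) (v t) = 0 := by
    intro t ht i
    have hexp : H t (u i) (v t) = bv t i + ∑ j, c t j * G t i j := by
      rw [hvt t, expandR]
      rfl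
    rw [hexp]
    have hm : (G t) *ᵥ ((G t).adjugate *ᵥ bv t) = d t • bv t := by
      rw [Matrix.mulVec_mulVec, Matrix.mul_adjugate, Matrix.smul_mulVec,
        Matrix.one_mulVec]
    have hsum : ∑ j, c t j * G t i j = -bv t i := by
      have hstep : ∀ j, c t j * G t i j
          = -((d t)⁻¹ * (G t i j * ((G t).adjugate *ᵥ bv t) j)) := by
        intro j; simp only [hcdef]; ring
      have h2 : ∑ j, G t i j * ((G t).adjugate *ᵥ bv t) j
          = (G t *ᵥ ((G t).adjugate *ᵥ bv t)) i := rfl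
      rw [Finset.sum_congr rfl (fun j _ => hstep j), Finset.sum_neg_distrib,
        ← Finset.mul_sum, h2, congrFun hm i, Pi.smul_apply, smul_eq_mul, ← mul_assoc,
        inv_mul_cancel₀ (hdet t ht), one_mul]
    rw [hsum]; ring
  have hperp_t : ∀ t ∈ Set.Ioo a b, ∀ x : W, H t (ι x) (v t) = 0 := by
    intro t ht x
    rw [expand_left]
    simp [hbase t ht]
  -- expansion of H t (v t) (v t)
  have hgexp : ∀ t, H t (v t) (v t) =
      H t v₀ v₀ + (∑ j, c t j * H t v₀ (u j))
      + (∑ i, star (c t i) * H t (u i) v₀)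
      + ∑ i, ∑ j, star (c t i) * (c t j * H t (u i) (u j)) := by
    intro t
    rw [hvt t, expandL]
    simp only [expandR]
    simp only [mul_add, Finset.mul_sum, Finset.sum_add_distrib]
    ring
  -- auxiliary vanishing
  have hperp' : ∀ j, H 0 v₀ (u j) = 0 := by
    intro j
    rw [← (hHerm 0 h0mem).eq (u j) v₀, hu, hperp (e j), map_zero]
  have hperpu : ∀ i, H 0 (u i) v₀ = 0 := fun i => hperp (e i)
  -- derivative of each piece
  have hA : HasDerivAt (fun t => H t v₀ v₀) (H' v₀ v₀) 0 := hderiv v₀ v₀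
  have hB : HasDerivAt (fun t => ∑ j, c t j * H t v₀ (u j)) 0 0 := by
    have hterm : ∀ j : Fin n, HasDerivAt (fun t => c t j * H t v₀ (u j)) 0 0 := by
      intro j
      have := ((hcdiff j).hasDerivAt).fun_mul (hderiv v₀ (u j))
      simpa [hc0, hperp'] using this
    have := HasDerivAt.fun_sum (fun j (_ : j ∈ Finset.univ) => hterm j)
    simpa using this
  have hC : HasDerivAt (fun t => ∑ i, star (c t i) * H t (u i) v₀) 0 0 := by
    have hterm : ∀ i : Fin n,
        HasDerivAt (fun t => star (c t i) * H t (u i) v₀) 0 0 := by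
      intro i
      have hs := ((hcdiff i).hasDerivAt).star
      have := hs.fun_mul (hderiv (u i) v₀)
      simpa [hc0, hperpu] using this
    have := HasDerivAt.fun_sum (fun i (_ : i ∈ Finset.univ) => hterm i)
    simpa using this
  have hD : HasDerivAt
      (fun t => ∑ i, ∑ j, star (c t i) * (c t j * H t (u i) (u j))) 0 0 := by
    have hterm : ∀ i j : Fin n,
        HasDerivAt (fun t => star (c t i) * (c t j * H t (u i) (u j))) 0 0 := by
      intro i j
      have hs := ((hcdiff i).hasDerivAt).star
      have h2 := ((hcdiff j).hasDerivAt).fun_mul (hderiv (u i) (u j))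
      have := hs.fun_mul h2
      simpa [hc0] using this
    have hrow : ∀ i : Fin n,
        HasDerivAt (fun t => ∑ j, star (c t i) * (c t j * H t (u i) (u j))) 0 0 := by
      intro i
      have := HasDerivAt.fun_sum (fun j (_ : j ∈ Finset.univ) => hterm i j)
      simpa using this
    have := HasDerivAt.fun_sum (fun i (_ : i ∈ Finset.univ) => hrow i)
    simpa using this
  have hgderiv : HasDerivAt (fun t => H t (v t) (v t)) (H' v₀ v₀) 0 := by
    have heq : (fun t => H t (v t) (v t)) = fun t =>
        H t v₀ v₀ + (∑ j, c t j * H t v₀ (u j))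
        + (∑ i, star (c t i) * H t (u i) v₀)
        + ∑ i, ∑ j, star (c t i) * (c t j * H t (u i) (u j)) := funext hgexp
    rw [heq]
    simpa using ((hA.fun_add hB).fun_add hC).fun_add hD
  -- real part has a local minimum at 0
  have hre : HasDerivAt (fun t => (H t (v t) (v t)).re) (H' v₀ v₀).re 0 :=
    Complex.reCLM.hasFDerivAt.comp_hasDerivAt 0 hgderiv
  have hIoo : Set.Ioo a b ∈ nhds (0:ℝ) := Ioo_mem_nhds ha hb
  have hmin : IsLocalMin (fun t => (H t (v t) (v t)).re) 0 := by
    apply Filter.eventually_of_mem hIoo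
    intro t ht
    show (H 0 (v 0) (v 0)).re ≤ (H t (v t) (v t)).re
    rw [hv0, hzero]
    simpa using hsemi t ht (v t) (hperp_t t ht)
  have hre0 : (H' v₀ v₀).re = 0 := hmin.hasDerivAt_eq_zero hre
  -- imaginary part vanishes identically
  have him : HasDerivAt (fun t => (H t (v t) (v t)).im) (H' v₀ v₀).im 0 :=
    Complex.imCLM.hasFDerivAt.comp_hasDerivAt 0 hgderiv
  have heq0 : (fun t => (H t (v t) (v t)).im) =ᶠ[nhds (0:ℝ)] fun _ => 0 :=
    Filter.eventually_of_mem hIoo fun t ht =>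
      Complex.conj_eq_iff_im.mp ((hHerm t ht).eq (v t) (v t))
  have him' : HasDerivAt (fun _ : ℝ => (0:ℝ)) (H' v₀ v₀).im 0 :=
    him.congr_of_eventuallyEq heq0.symm
  have him0 : (H' v₀ v₀).im = 0 := him'.unique (hasDerivAt_const 0 0)
  exact Complex.ext hre0 him0

/-- Lemma `l.derivative`: let `H_t`, `t ∈ (a,b) ∋ 0`, be a family of
Hermitian forms on `V` such that for each `t`, `ιW` is a nondegenerate subspace for `H_t`
and `H_t` is positive semidefinite on `(ιW)^⊥_{H_t}`, and suppose the derivative `H'₀`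
at `t = 0` exists. Then any `v₀ ∈ (ιW)^⊥_{H₀}` with `H₀(v₀,v₀) = 0` satisfies
`H'₀(v₀,v₀) = 0`. In particular, if `H'₀` is definite on `(ιW)^⊥_{H₀}`, then `H₀` is
positive definite on `(ιW)^⊥_{H₀}`. -/
theorem stmt_5 {V W : Type*} [AddCommGroup V] [Module ℂ V] [FiniteDimensional ℂ V]
    [AddCommGroup W] [Module ℂ W] [FiniteDimensional ℂ W]
    (ι : W →ₗ[ℂ] V) (hι : Function.Injective ι)
    (a b : ℝ) (ha : a < 0) (hb : 0 < b)
    (H : ℝ → (V →ₗ⋆[ℂ] V →ₗ[ℂ] ℂ))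
    (hHerm : ∀ t ∈ Set.Ioo a b, (H t).IsSymm)
    (hnd : ∀ t ∈ Set.Ioo a b, ∀ x : W, (∀ y : W, H t (ι y) (ι x) = 0) → x = 0)
    (hsemi : ∀ t ∈ Set.Ioo a b, ∀ v : V, (∀ x : W, H t (ι x) v = 0) → 0 ≤ (H t v v).re)
    (H' : V →ₗ⋆[ℂ] V →ₗ[ℂ] ℂ)
    (hderiv : ∀ v w : V, HasDerivAt (fun t : ℝ => H t v w) (H' v w) 0) :
    (∀ v₀ : V, (∀ x : W, H 0 (ι x) v₀ = 0) → H 0 v₀ v₀ = 0 → H' v₀ v₀ = 0) ∧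
    (((∀ v : V, (∀ x : W, H 0 (ι x) v = 0) → v ≠ 0 → 0 < (H' v v).re) ∨
        (∀ v : V, (∀ x : W, H 0 (ι x) v = 0) → v ≠ 0 → (H' v v).re < 0)) →
      (∀ v : V, (∀ x : W, H 0 (ι x) v = 0) → v ≠ 0 → 0 < (H 0 v v).re)) := by
  have h0mem : (0:ℝ) ∈ Set.Ioo a b := ⟨ha, hb⟩
  have key : ∀ v₀ : V, (∀ x : W, H 0 (ι x) v₀ = 0) → H 0 v₀ v₀ = 0 → H' v₀ v₀ = 0 :=
    fun v₀ h1 h2 => key_lemma ι hι a b ha hb H hHerm hnd hsemi H' hderiv v₀ h1 h2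
  refine ⟨key, ?_⟩
  intro hdef v hv hvne
  rcases lt_or_eq_of_le (hsemi 0 h0mem v hv) with h | h
  · exact h
  · exfalso
    have hreal : (H 0 v v).im = 0 := Complex.conj_eq_iff_im.mp ((hHerm 0 h0mem).eq v v)
    have hz : H 0 v v = 0 := Complex.ext (by simpa using h.symm) (by simpa using hreal)
    have hk := key v hv hz
    rcases hdef with hd | hd
    · have := hd v hv hvne
      rw [hk] at this; simp at this
    · have := hd v hv hvne
      rw [hk] at this; simp at this
end

section
/- The map r₋ sending a pair (H, Φ) ∈ Herm(V) × Sesq°(W,V) to the negative index of inertia of H restricted to W^⊥_Φ is lower semicontinuous; that is, for every a ∈ ℕ, the set of pairs with negative index of inertia at most a is closed in Herm(V) × Sesq°(W,V). -/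
open Matrix

/-- The sesquilinear form on `ℂⁿ` associated to a matrix `H`. -/
noncomputable def matForm {n : ℕ} (H : Matrix (Fin n) (Fin n) ℂ) (x y : Fin n → ℂ) : ℂ :=
  star x ⬝ᵥ H.mulVec y

/-- The pairing `W × V → ℂ` associated to a matrix `Φ : Matrix (Fin m) (Fin n) ℂ`. -/
noncomputable def matPairing {m n : ℕ} (Φ : Matrix (Fin m) (Fin n) ℂ) (w : Fin m → ℂ) (v : Fin n → ℂ) : ℂ :=
  star w ⬝ᵥ Φ.mulVec v

/-- `W^⊥_Φ = {v ∈ V : Φ(w,v) = 0 for all w ∈ W}`. -/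
def perpPairing {m n : ℕ} (Φ : Matrix (Fin m) (Fin n) ℂ) : Set (Fin n → ℂ) :=
  {v | ∀ w : Fin m → ℂ, matPairing Φ w v = 0}

/-- The negative index of inertia of the Hermitian form of `H` restricted to a subset `S`:
the maximal dimension of a negative definite subspace contained in `S`. -/
noncomputable def negInertiaOn {n : ℕ} (H : Matrix (Fin n) (Fin n) ℂ)
    (S : Set (Fin n → ℂ)) : ℕ :=
  sSup {d : ℕ | ∃ U : Submodule ℂ (Fin n → ℂ), (U : Set (Fin n → ℂ)) ⊆ S ∧
    Module.finrank ℂ U = d ∧ ∀ v ∈ U, v ≠ 0 → (matForm H v v).re < 0}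

/-- The space `Herm(V) × Sesq°(W,V)` of pairs of a Hermitian form on `V = ℂⁿ` together
with a left-nondegenerate sesquilinear pairing `W × V → ℂ`, `W = ℂᵐ`, with its natural
(subspace) topology, forms represented by matrices. -/
def HermSesq (n m : ℕ) : Type :=
  {p : Matrix (Fin n) (Fin n) ℂ × Matrix (Fin m) (Fin n) ℂ //
    p.1.IsHermitian ∧ ∀ w : Fin m → ℂ, (∀ v : Fin n → ℂ, matPairing p.2 w v = 0) → w = 0}

noncomputable instance (n m : ℕ) : TopologicalSpace (HermSesq n m) :=
  instTopologicalSpaceSubtype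

namespace Stmt6Aux

variable {n m N : ℕ}

/-- Gram matrix of the form of `H` along a family `u`. -/
noncomputable def gram (H : Matrix (Fin n) (Fin n) ℂ) (u : Fin N → Fin n → ℂ) :
    Matrix (Fin N) (Fin N) ℂ :=
  Matrix.of fun j k => matForm H (u j) (u k)

/-- Negative definiteness of a matrix `G`, via the real part of its quadratic form. -/
def NegDefM {N : ℕ} (G : Matrix (Fin N) (Fin N) ℂ) : Prop :=
  ∀ c : Fin N → ℂ, c ≠ 0 → (star c ⬝ᵥ G.mulVec c).re < 0

lemma sum_dotProduct' {ι : Type*} (s : Finset ι) (g : ι → Fin n → ℂ) (w : Fin n → ℂ) :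
    (∑ j ∈ s, g j) ⬝ᵥ w = ∑ j ∈ s, g j ⬝ᵥ w := by
  simp only [dotProduct, Finset.sum_apply, Finset.sum_mul]
  exact Finset.sum_comm

lemma dotProduct_sum' {ι : Type*} (s : Finset ι) (w : Fin n → ℂ) (g : ι → Fin n → ℂ) :
    w ⬝ᵥ (∑ j ∈ s, g j) = ∑ j ∈ s, w ⬝ᵥ g j := by
  simp only [dotProduct, Finset.sum_apply, Finset.mul_sum]
  exact Finset.sum_comm

lemma matForm_smul_left (H : Matrix (Fin n) (Fin n) ℂ) (z : ℂ) (x y : Fin n → ℂ) :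
    matForm H (z • x) y = star z * matForm H x y := by
  simp [matForm, star_smul, smul_dotProduct, smul_eq_mul]

lemma matForm_smul_right (H : Matrix (Fin n) (Fin n) ℂ) (z : ℂ) (x y : Fin n → ℂ) :
    matForm H x (z • y) = z * matForm H x y := by
  simp [matForm, Matrix.mulVec_smul, dotProduct_smul, smul_eq_mul]

lemma matForm_sum_left {ι : Type*} (H : Matrix (Fin n) (Fin n) ℂ) (s : Finset ι)
    (f : ι → Fin n → ℂ) (y : Fin n → ℂ) :
    matForm H (∑ j ∈ s, f j) y = ∑ j ∈ s, matForm H (f j) y := by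
  simp only [matForm, star_sum, sum_dotProduct']

lemma matForm_sum_right {ι : Type*} (H : Matrix (Fin n) (Fin n) ℂ) (s : Finset ι)
    (x : Fin n → ℂ) (f : ι → Fin n → ℂ) :
    matForm H x (∑ j ∈ s, f j) = ∑ j ∈ s, matForm H x (f j) := by
  simp only [matForm, dotProduct_mulVec, dotProduct_sum']

/-- The quadratic form of the Gram matrix computes the form on linear combinations. -/
lemma quad_gram (H : Matrix (Fin n) (Fin n) ℂ) (u : Fin N → Fin n → ℂ) (c : Fin N → ℂ) :
    star c ⬝ᵥ (gram H u).mulVec c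
      = matForm H (∑ j, c j • u j) (∑ k, c k • u k) := by
  rw [matForm_sum_left]
  simp only [matForm_smul_left, matForm_sum_right, matForm_smul_right]
  simp only [dotProduct, Matrix.mulVec, gram, Matrix.of_apply, Pi.star_apply,
    Finset.mul_sum]
  refine Finset.sum_congr rfl fun j _ => Finset.sum_congr rfl fun k _ => by ring

open scoped ComplexOrder in
lemma mem_perp_iff (Φ : Matrix (Fin m) (Fin n) ℂ) (v : Fin n → ℂ) :
    v ∈ perpPairing Φ ↔ Φ.mulVec v = 0 := by
  constructor
  · intro h
    have h2 := h (Φ.mulVec v)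
    simp only [matPairing] at h2
    exact dotProduct_star_self_eq_zero.mp h2
  · intro h w
    simp [matPairing, h]

lemma perp_eq_ker (Φ : Matrix (Fin m) (Fin n) ℂ) :
    perpPairing Φ = (LinearMap.ker (Matrix.mulVecLin Φ) : Set (Fin n → ℂ)) := by
  ext v
  simp [mem_perp_iff, LinearMap.mem_ker, Matrix.mulVecLin_apply]

/-- The indexing set in `negInertiaOn` for `S = perpPairing Φ`. -/
def inertiaSet (H : Matrix (Fin n) (Fin n) ℂ) (S : Set (Fin n → ℂ)) : Set ℕ :=
  {d : ℕ | ∃ U : Submodule ℂ (Fin n → ℂ), (U : Set (Fin n → ℂ)) ⊆ S ∧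
    Module.finrank ℂ U = d ∧ ∀ v ∈ U, v ≠ 0 → (matForm H v v).re < 0}

lemma negInertiaOn_eq (H : Matrix (Fin n) (Fin n) ℂ) (S : Set (Fin n → ℂ)) :
    negInertiaOn H S = sSup (inertiaSet H S) := rfl

lemma inertiaSet_bddAbove (H : Matrix (Fin n) (Fin n) ℂ) (S : Set (Fin n → ℂ)) :
    BddAbove (inertiaSet H S) := by
  refine ⟨n, fun d hd => ?_⟩
  obtain ⟨U, -, hrk, -⟩ := hd
  rw [← hrk]
  calc Module.finrank ℂ U ≤ Module.finrank ℂ (Fin n → ℂ) := Submodule.finrank_le U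
    _ = n := Module.finrank_fin_fun ℂ

lemma inertiaSet_nonempty (H : Matrix (Fin n) (Fin n) ℂ) (S : Set (Fin n → ℂ))
    (h0 : (0 : Fin n → ℂ) ∈ S) : (inertiaSet H S).Nonempty := by
  refine ⟨0, ⊥, ?_, finrank_bot ℂ _, ?_⟩
  · intro v hv
    have hv' : v ∈ (⊥ : Submodule ℂ (Fin n → ℂ)) := hv
    rw [Submodule.mem_bot] at hv'
    rw [hv']; exact h0
  · intro v hv hne
    rw [Submodule.mem_bot] at hv
    exact absurd hv hne

/-- Characterization of `a < negInertiaOn` by a family of vectors in the perp with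
negative definite Gram matrix. -/
lemma lt_negInertia_iff (H : Matrix (Fin n) (Fin n) ℂ) (Φ : Matrix (Fin m) (Fin n) ℂ)
    (a : ℕ) :
    a < negInertiaOn H (perpPairing Φ) ↔
      ∃ u : Fin (a + 1) → (Fin n → ℂ),
        (∀ i, Φ.mulVec (u i) = 0) ∧ NegDefM (gram H u) := by
  have hbdd := inertiaSet_bddAbove H (perpPairing Φ)
  have h0 : (0 : Fin n → ℂ) ∈ perpPairing Φ := by
    rw [mem_perp_iff]; exact Matrix.mulVec_zero Φ
  have hne := inertiaSet_nonempty H (perpPairing Φ) h0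
  constructor
  · intro hlt
    rw [negInertiaOn_eq] at hlt
    have hmem := Nat.sSup_mem hne hbdd
    obtain ⟨U, hsub, hrk, hneg⟩ := hmem
    have hle : a + 1 ≤ Module.finrank ℂ U := by omega
    let b := Module.finBasis ℂ U
    let e : Fin (a + 1) → Fin (Module.finrank ℂ U) := Fin.castLE hle
    have he : Function.Injective e := Fin.castLE_injective hle
    refine ⟨fun i => (b (e i) : Fin n → ℂ), fun i => ?_, ?_⟩
    · rw [← mem_perp_iff]; exact hsub (b (e i)).2
    · intro c hc
      rw [quad_gram]
      set v : U := ∑ j, c j • b (e j) with hv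
      have hcoe : ((v : Fin n → ℂ)) = ∑ j, c j • ((b (e j) : Fin n → ℂ)) := by
        simp [hv]
      rw [← hcoe]
      have hvne : (v : Fin n → ℂ) ≠ 0 := by
        intro h
        have hv0 : v = 0 := by
          exact_mod_cast Subtype.ext h
        have hli : LinearIndependent ℂ fun j : Fin (a + 1) => b (e j) :=
          b.linearIndependent.comp e he
        have := Fintype.linearIndependent_iff.mp hli c (by rw [← hv]; exact_mod_cast hv0)
        exact hc (funext this)
      exact hneg _ v.2 hvne
  · rintro ⟨u, hperp, hneg⟩
    have hli : LinearIndependent ℂ u := by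
      rw [Fintype.linearIndependent_iff]
      intro c hcsum
      by_contra hcon
      push_neg at hcon
      have hc : c ≠ 0 := by
        obtain ⟨i, hi⟩ := hcon
        intro h; exact hi (congrFun h i)
      have := hneg c hc
      rw [quad_gram, hcsum] at this
      simp [matForm] at this
    have hmem : a + 1 ∈ inertiaSet H (perpPairing Φ) := by
      refine ⟨Submodule.span ℂ (Set.range u), ?_, ?_, ?_⟩
      · rw [perp_eq_ker]
        intro v hv
        have : Submodule.span ℂ (Set.range u) ≤ LinearMap.ker (Matrix.mulVecLin Φ) := by
          rw [Submodule.span_le]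
          rintro - ⟨i, rfl⟩
          simp [LinearMap.mem_ker, Matrix.mulVecLin_apply, hperp i]
        exact this hv
      · rw [finrank_span_eq_card hli, Fintype.card_fin]
      · intro v hv hvne
        obtain ⟨c, hc⟩ := (Submodule.mem_span_range_iff_exists_fun ℂ).mp hv
        have hcne : c ≠ 0 := by
          intro h; rw [h] at hc; simp at hc; exact hvne hc.symm
        have := hneg c hcne
        rwa [quad_gram, hc] at this
    rw [negInertiaOn_eq]
    exact lt_of_lt_of_le (Nat.lt_succ_self a) (le_csSup hbdd hmem)

/-- Real scaling of the quadratic form. -/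
lemma quad_real_smul (G : Matrix (Fin N) (Fin N) ℂ) (t : ℝ) (c : Fin N → ℂ) :
    (star ((t : ℂ) • c) ⬝ᵥ G.mulVec ((t : ℂ) • c)).re
      = t ^ 2 * (star c ⬝ᵥ G.mulVec c).re := by
  rw [Matrix.mulVec_smul, star_smul, smul_dotProduct, dotProduct_smul]
  simp only [smul_eq_mul, Complex.star_def, Complex.conj_ofReal, ← mul_assoc]
  rw [← Complex.ofReal_mul, Complex.re_ofReal_mul]
  ring

/-- Negative-definiteness is determined on the unit sphere. -/
lemma negDefM_iff_sphere (G : Matrix (Fin (N + 1)) (Fin (N + 1)) ℂ) :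
    NegDefM G ↔ ∀ c ∈ Metric.sphere (0 : Fin (N + 1) → ℂ) 1,
      (star c ⬝ᵥ G.mulVec c).re < 0 := by
  constructor
  · intro h c hc
    refine h c ?_
    intro h0
    rw [mem_sphere_zero_iff_norm] at hc
    rw [h0] at hc; simp at hc
  · intro h c hc
    have hnorm : ‖c‖ ≠ 0 := norm_ne_zero_iff.mpr hc
    have hpos : (0 : ℝ) < ‖c‖ := norm_pos_iff.mpr hc
    set c' : Fin (N + 1) → ℂ := ((‖c‖⁻¹ : ℝ) : ℂ) • c with hc'
    have hc's : c' ∈ Metric.sphere (0 : Fin (N + 1) → ℂ) 1 := by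
      rw [mem_sphere_zero_iff_norm, hc', norm_smul]
      simp [abs_of_pos (inv_pos.mpr hpos), inv_mul_cancel₀ hnorm]
    have hrec : c = ((‖c‖ : ℝ) : ℂ) • c' := by
      rw [hc', smul_smul, ← Complex.ofReal_mul, mul_inv_cancel₀ hnorm]
      simp
    have := h c' hc's
    calc (star c ⬝ᵥ G.mulVec c).re
        = ‖c‖ ^ 2 * (star c' ⬝ᵥ G.mulVec c').re := by
          conv_lhs => rw [hrec, quad_real_smul]
      _ < 0 := mul_neg_of_pos_of_neg (by positivity) this

/-- The set of negative-definite matrices is open. -/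
lemma isOpen_negDefM :
    IsOpen {G : Matrix (Fin (N + 1)) (Fin (N + 1)) ℂ | NegDefM G} := by
  rw [isOpen_iff_forall_mem_open]
  intro G₀ hG₀
  set S := Metric.sphere (0 : Fin (N + 1) → ℂ) 1 with hS
  have hScomp : IsCompact S := isCompact_sphere _ _
  have hSne : S.Nonempty := NormedSpace.sphere_nonempty.mpr zero_le_one
  have hq : Continuous fun c : Fin (N + 1) → ℂ => (star c ⬝ᵥ G₀.mulVec c).re :=
    Complex.continuous_re.comp
      ((continuous_id.star).dotProduct (continuous_const.matrix_mulVec continuous_id))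
  obtain ⟨c₀, hc₀S, hmax⟩ := hScomp.exists_isMaxOn hSne hq.continuousOn
  set M : ℝ := (star c₀ ⬝ᵥ G₀.mulVec c₀).re with hM
  have hMneg : M < 0 := (negDefM_iff_sphere G₀).mp hG₀ c₀ hc₀S
  set K : ℝ := ((N + 1 : ℕ) : ℝ) ^ 2 + 1 with hK
  have hKpos : (0 : ℝ) < K := by positivity
  set δ : ℝ := -M / K with hδ
  have hδpos : (0 : ℝ) < δ := div_pos (by linarith) hKpos
  refine ⟨{G | ∀ j k, ‖G j k - G₀ j k‖ < δ}, ?_, ?_, ?_⟩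
  · -- the δ-box is inside the negative definite set
    intro G hG
    rw [Set.mem_setOf_eq, negDefM_iff_sphere]
    intro c hcS
    have hsplit : star c ⬝ᵥ G.mulVec c
        = star c ⬝ᵥ G₀.mulVec c + star c ⬝ᵥ (G - G₀).mulVec c := by
      rw [Matrix.sub_mulVec, dotProduct_sub]; ring
    have hcle : ∀ i, ‖c i‖ ≤ 1 := by
      intro i
      rw [mem_sphere_zero_iff_norm] at hcS
      calc ‖c i‖ ≤ ‖c‖ := norm_le_pi_norm c i
        _ = 1 := hcS
    have hbound : (star c ⬝ᵥ (G - G₀).mulVec c).re < -M := by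
      have h1 : (star c ⬝ᵥ (G - G₀).mulVec c).re ≤ ‖star c ⬝ᵥ (G - G₀).mulVec c‖ := by
        exact Complex.re_le_norm _
      have h2 : ‖star c ⬝ᵥ (G - G₀).mulVec c‖ ≤ ∑ j, ∑ k, ‖G j k - G₀ j k‖ := by
        calc ‖star c ⬝ᵥ (G - G₀).mulVec c‖
            ≤ ∑ j, ‖star (c j) * ((G - G₀).mulVec c) j‖ := by
              rw [dotProduct]; exact norm_sum_le _ _
          _ ≤ ∑ j, ∑ k, ‖G j k - G₀ j k‖ := by
              refine Finset.sum_le_sum fun j _ => ?_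
              rw [norm_mul, norm_star]
              calc ‖c j‖ * ‖((G - G₀).mulVec c) j‖
                  ≤ 1 * ‖((G - G₀).mulVec c) j‖ := by
                    exact mul_le_mul_of_nonneg_right (hcle j) (norm_nonneg _)
                _ = ‖∑ k, (G j k - G₀ j k) * c k‖ := by
                    simp [Matrix.mulVec, dotProduct, Matrix.sub_apply]
                _ ≤ ∑ k, ‖(G j k - G₀ j k) * c k‖ := norm_sum_le _ _
                _ ≤ ∑ k, ‖G j k - G₀ j k‖ := by
                    refine Finset.sum_le_sum fun k _ => ?_
                    rw [norm_mul]
                    calc ‖G j k - G₀ j k‖ * ‖c k‖ ≤ ‖G j k - G₀ j k‖ * 1 :=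
                          mul_le_mul_of_nonneg_left (hcle k) (norm_nonneg _)
                      _ = ‖G j k - G₀ j k‖ := mul_one _
      have h3 : ∑ j, ∑ k, ‖G j k - G₀ j k‖ ≤ ((N + 1 : ℕ) : ℝ) ^ 2 * δ := by
        calc ∑ j, ∑ k, ‖G j k - G₀ j k‖
            ≤ ∑ j : Fin (N + 1), ((N + 1 : ℕ) : ℝ) * δ := by
              refine Finset.sum_le_sum fun j _ => ?_
              have := Finset.sum_le_card_nsmul Finset.univ (fun k => ‖G j k - G₀ j k‖)
                δ (fun k _ => le_of_lt (hG j k))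
              simpa [nsmul_eq_mul] using this
          _ = ((N + 1 : ℕ) : ℝ) ^ 2 * δ := by
              simp only [Finset.sum_const, Finset.card_univ, Fintype.card_fin, nsmul_eq_mul]
              push_cast; ring
      have h4 : ((N + 1 : ℕ) : ℝ) ^ 2 * δ < -M := by
        have : ((N + 1 : ℕ) : ℝ) ^ 2 * δ < K * δ := by
          rw [hK]; nlinarith
        rw [hδ] at this ⊢
        calc ((N + 1 : ℕ) : ℝ) ^ 2 * (-M / K) < K * (-M / K) := this
          _ = -M := by field_simp
      linarith
    have hmaxle : (star c ⬝ᵥ G₀.mulVec c).re ≤ M := hmax hcS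
    rw [hsplit, Complex.add_re]
    linarith
  · -- openness of the δ-box
    have : {G : Matrix (Fin (N + 1)) (Fin (N + 1)) ℂ | ∀ j k, ‖G j k - G₀ j k‖ < δ}
        = ⋂ j, ⋂ k, {G | ‖G j k - G₀ j k‖ < δ} := by
      ext G; simp
    rw [this]
    refine isOpen_iInter_of_finite fun j => isOpen_iInter_of_finite fun k => ?_
    have hcont : Continuous fun G : Matrix (Fin (N + 1)) (Fin (N + 1)) ℂ =>
        ‖G j k - G₀ j k‖ :=
      ((continuous_id.matrix_elem j k).sub continuous_const).norm
    exact isOpen_lt hcont continuous_const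
  · intro j k; simp [hδpos]

/-- A matrix whose `mulVec` maps everything into `ker Φ`, and which acts as
`det (Φ * Φᴴ) • id` on `ker Φ`. -/
noncomputable def Qmat (Φ : Matrix (Fin m) (Fin n) ℂ) : Matrix (Fin n) (Fin n) ℂ :=
  (Φ * Φᴴ).det • (1 : Matrix (Fin n) (Fin n) ℂ) - Φᴴ * (Φ * Φᴴ).adjugate * Φ

lemma mul_Qmat (Φ : Matrix (Fin m) (Fin n) ℂ) : Φ * Qmat Φ = 0 := by
  unfold Qmat
  rw [Matrix.mul_sub, Matrix.mul_smul, Matrix.mul_one, ← Matrix.mul_assoc,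
    ← Matrix.mul_assoc, Matrix.mul_adjugate, Matrix.smul_mul, Matrix.one_mul, sub_self]

lemma Qmat_perp (Φ : Matrix (Fin m) (Fin n) ℂ) (x : Fin n → ℂ) :
    Φ *ᵥ (Qmat Φ *ᵥ x) = 0 := by
  rw [Matrix.mulVec_mulVec, mul_Qmat, Matrix.zero_mulVec]

lemma Qmat_fix (Φ : Matrix (Fin m) (Fin n) ℂ) (x : Fin n → ℂ) (hx : Φ *ᵥ x = 0) :
    Qmat Φ *ᵥ x = (Φ * Φᴴ).det • x := by
  unfold Qmat
  rw [Matrix.sub_mulVec, Matrix.smul_mulVec, Matrix.one_mulVec]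
  have h : (Φᴴ * (Φ * Φᴴ).adjugate * Φ) *ᵥ x = 0 := by
    rw [← Matrix.mulVec_mulVec, hx, Matrix.mulVec_zero]
  rw [h, sub_zero]

open scoped ComplexOrder in
lemma det_ne_zero (p : HermSesq n m) : (p.val.2 * p.val.2ᴴ).det ≠ 0 := by
  intro h
  obtain ⟨w, hw, hw0⟩ := Matrix.exists_mulVec_eq_zero_iff.mpr h
  set Φ := p.val.2 with hΦ
  have h1 : star w ⬝ᵥ (Φ * Φᴴ) *ᵥ w = 0 := by rw [hw0]; simp
  have hkey : star w ᵥ* Φ = star (Φᴴ *ᵥ w) := by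
    rw [Matrix.star_mulVec, Matrix.conjTranspose_conjTranspose]
  have h2 : star (Φᴴ *ᵥ w) ⬝ᵥ (Φᴴ *ᵥ w) = 0 := by
    rw [← Matrix.mulVec_mulVec, Matrix.dotProduct_mulVec, hkey] at h1
    exact h1
  have hΦw : Φᴴ *ᵥ w = 0 := dotProduct_star_self_eq_zero.mp h2
  refine hw (p.2.2 w fun v => ?_)
  rw [matPairing, Matrix.dotProduct_mulVec, hkey, hΦw]
  simp

end Stmt6Aux

/-- Lemma `l.cont0`, case of `r₋`: the map sending a pair
`(H, Φ) ∈ Herm(V) × Sesq°(W,V)` to the negative index of inertia of `H` on `W^⊥_Φ` is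
lower semicontinuous: for every `a ∈ ℕ`, the set of pairs with negative index of inertia
at most `a` is closed in `Herm(V) × Sesq°(W,V)`. -/
theorem stmt_6 (n m : ℕ) (a : ℕ) :
    IsClosed {p : HermSesq n m | negInertiaOn p.val.1 (perpPairing p.val.2) ≤ a} := by
  rw [← isOpen_compl_iff]
  have hset : {p : HermSesq n m | negInertiaOn p.val.1 (perpPairing p.val.2) ≤ a}ᶜ
      = {p : HermSesq n m | a < negInertiaOn p.val.1 (perpPairing p.val.2)} := by
    ext p; simp [not_le]
  rw [hset, isOpen_iff_forall_mem_open]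
  intro p₀ hp₀
  rw [Set.mem_setOf_eq, Stmt6Aux.lt_negInertia_iff] at hp₀
  obtain ⟨u, hperp, hneg⟩ := hp₀
  set F : HermSesq n m → Matrix (Fin (a + 1)) (Fin (a + 1)) ℂ :=
    fun p => Stmt6Aux.gram p.val.1 (fun i => Stmt6Aux.Qmat p.val.2 *ᵥ u i) with hF
  have hvalcont : Continuous fun p : HermSesq n m => p.val := continuous_subtype_val
  have hH : Continuous fun p : HermSesq n m => p.val.1 := hvalcont.fst
  have hΦ : Continuous fun p : HermSesq n m => p.val.2 := hvalcont.snd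
  have hQ : Continuous fun p : HermSesq n m => Stmt6Aux.Qmat p.val.2 := by
    unfold Stmt6Aux.Qmat
    have h1 : Continuous fun p : HermSesq n m => p.val.2 * p.val.2ᴴ :=
      hΦ.matrix_mul hΦ.matrix_conjTranspose
    exact ((h1.matrix_det).smul continuous_const).sub
      ((hΦ.matrix_conjTranspose.matrix_mul h1.matrix_adjugate).matrix_mul hΦ)
  have hx : ∀ j, Continuous fun p : HermSesq n m => Stmt6Aux.Qmat p.val.2 *ᵥ u j :=
    fun j => hQ.matrix_mulVec continuous_const
  have hFc : Continuous F := by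
    apply continuous_matrix
    intro j k
    exact ((hx j).star).dotProduct (hH.matrix_mulVec (hx k))
  refine ⟨F ⁻¹' {G | Stmt6Aux.NegDefM G}, ?_, Stmt6Aux.isOpen_negDefM.preimage hFc, ?_⟩
  · intro p hp
    rw [Set.mem_setOf_eq, Stmt6Aux.lt_negInertia_iff]
    exact ⟨fun i => Stmt6Aux.Qmat p.val.2 *ᵥ u i,
      fun i => Stmt6Aux.Qmat_perp _ _, hp⟩
  · rw [Set.mem_preimage, Set.mem_setOf_eq]
    set d : ℂ := (p₀.val.2 * p₀.val.2ᴴ).det with hd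
    have hd0 : d ≠ 0 := Stmt6Aux.det_ne_zero p₀
    have hfix : ∀ i, Stmt6Aux.Qmat p₀.val.2 *ᵥ u i = d • u i :=
      fun i => Stmt6Aux.Qmat_fix _ _ (hperp i)
    intro c hc
    have hgr : F p₀ = Stmt6Aux.gram p₀.val.1 (fun i => d • u i) := by
      show Stmt6Aux.gram p₀.val.1 (fun i => Stmt6Aux.Qmat p₀.val.2 *ᵥ u i) = _
      rw [funext hfix]
    rw [hgr, Stmt6Aux.quad_gram]
    have hcomb : (∑ j, c j • d • u j) = d • ∑ j, c j • u j := by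
      rw [Finset.smul_sum]; exact Finset.sum_congr rfl fun j _ => smul_comm _ _ _
    have hprev := hneg c hc
    rw [Stmt6Aux.quad_gram] at hprev
    rw [hcomb, Stmt6Aux.matForm_smul_left, Stmt6Aux.matForm_smul_right, ← mul_assoc]
    have hsd : star d * d = ((Complex.normSq d : ℝ) : ℂ) := by
      rw [Complex.star_def, mul_comm, Complex.mul_conj]
    rw [hsd, Complex.re_ofReal_mul]
    exact mul_neg_of_pos_of_neg (Complex.normSq_pos.mpr hd0) hprev
end

section
/- Let M be a commutative monoid with a multiplication-compatible preorder, and let f₀,…,f_n be an M-concave sequence. Let μ = (μ₁,…,μ_m) and ν = (ν₁,…,ν_m) be partitions (weakly decreasing sequences of nonnegative integers ≤ n) with |μ| = |ν| and dominance μ ≥ ν (∑_{i≤j} μ_i ≥ ∑_{i≤j} ν_i for all j). Then f_{ν₁} ⋯ f_{ν_m} ≥ f_{μ₁} ⋯ f_{μ_m} in M. -/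
/-- Product `v 0 * v 1 * ⋯ * v m` of a nonempty tuple in a (possibly non-unital)
multiplicative structure. -/
def prodTuple {M : Type*} [Mul M] : ∀ {m : ℕ}, (Fin (m + 1) → M) → M
  | 0, v => v 0
  | _ + 1, v => prodTuple (fun i => v i.castSucc) * v (Fin.last _)

lemma prodTuple_coe {M : Type*} [CommSemigroup M] : ∀ {m : ℕ} (v : Fin (m + 1) → M),
    ((prodTuple v : M) : WithOne M) = ∏ i, (v i : WithOne M)
  | 0, v => by simp [prodTuple]
  | m + 1, v => by
    rw [prodTuple, WithOne.coe_mul, prodTuple_coe]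
    exact (Fin.prod_univ_castSucc (fun i => (v i : WithOne M))).symm

lemma prodTuple_le_of_two {M : Type*} [CommSemigroup M] [Preorder M]
    (hcompat : ∀ a b c d : M, a ≤ b → c ≤ d → a * c ≤ b * d)
    {m : ℕ} (v w : Fin (m + 1) → M) (a b : Fin (m + 1)) (hab : a ≠ b)
    (hoff : ∀ i, i ≠ a → i ≠ b → v i = w i)
    (hprod : v a * v b ≤ w a * w b) : prodTuple v ≤ prodTuple w := by
  have hbmem : b ∈ Finset.univ.erase a := Finset.mem_erase.2 ⟨hab.symm, Finset.mem_univ b⟩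
  set C : WithOne M := ∏ i ∈ (Finset.univ.erase a).erase b, (v i : WithOne M) with hC
  have key : ∀ u : Fin (m + 1) → M, (∀ i, i ≠ a → i ≠ b → v i = u i) →
      ((prodTuple u : M) : WithOne M) = C * ↑(u a * u b) := by
    intro u hu
    rw [prodTuple_coe, ← Finset.mul_prod_erase _ _ (Finset.mem_univ a),
      ← Finset.mul_prod_erase _ _ hbmem]
    have hCu : ∏ i ∈ (Finset.univ.erase a).erase b, (u i : WithOne M) = C := by
      refine Finset.prod_congr rfl fun i hi => ?_
      rcases Finset.mem_erase.1 hi with ⟨hib, hi'⟩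
      rcases Finset.mem_erase.1 hi' with ⟨hia, _⟩
      rw [hu i hia hib]
    rw [hCu, WithOne.coe_mul, mul_comm C, mul_assoc]
  have hv := key v (fun i _ _ => rfl)
  have hw := key w hoff
  have hcases : ∀ x : WithOne M, x = 1 ∨ ∃ c : M, x = c := fun x =>
    WithOne.cases_on x (Or.inl rfl) (fun c => Or.inr ⟨c, rfl⟩)
  rcases hcases C with h1 | ⟨c, hc⟩
  · rw [h1, one_mul] at hv hw
    rw [WithOne.coe_inj] at hv hw
    rw [hv, hw]; exact hprod
  · rw [hc, ← WithOne.coe_mul, WithOne.coe_inj] at hv hw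
    rw [hv, hw]
    exact hcompat c c _ _ le_rfl hprod

lemma Iic_last_eq_univ (m : ℕ) : Finset.Iic (Fin.last m) = Finset.univ := by
  ext i; simp [Fin.le_last]

set_option maxHeartbeats 1000000 in
/-- Lemma `l.Li`: let `M` be a commutative monoid with a
multiplication-compatible preorder and `f₀,…,f_n` an `M`-concave sequence. If
`μ = (μ₁,…,μ_m)` and `ν = (ν₁,…,ν_m)` are partitions with entries `≤ n`, `|μ| = |ν|`,
and `μ ≥ ν` in dominance order, then `f_{ν₁} ⋯ f_{ν_m} ≥ f_{μ₁} ⋯ f_{μ_m}`. -/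
theorem stmt_9 {M : Type*} [CommSemigroup M] [Preorder M]
    (hcompat : ∀ a b c d : M, a ≤ b → c ≤ d → a * c ≤ b * d)
    (n : ℕ) (f : ℕ → M)
    (hconc : ∀ i j : ℕ, 0 < i → i ≤ j → j < n → f (i - 1) * f (j + 1) ≤ f i * f j)
    (m : ℕ) (μ ν : Fin (m + 1) → ℕ)
    (hμ : Antitone μ) (hν : Antitone ν)
    (hμn : ∀ i, μ i ≤ n) (hνn : ∀ i, ν i ≤ n)
    (hsum : ∑ i, μ i = ∑ i, ν i)
    (hdom : ∀ j : Fin (m + 1), ∑ i ∈ Finset.Iic j, ν i ≤ ∑ i ∈ Finset.Iic j, μ i) :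
    prodTuple (fun i => f (μ i)) ≤ prodTuple (fun i => f (ν i)) := by
  suffices H : ∀ k : ℕ, ∀ μ : Fin (m + 1) → ℕ, Antitone μ → (∀ i, μ i ≤ n) →
      (∑ i, μ i = ∑ i, ν i) →
      (∀ j : Fin (m + 1), ∑ i ∈ Finset.Iic j, ν i ≤ ∑ i ∈ Finset.Iic j, μ i) →
      (∑ j : Fin (m + 1), ∑ i ∈ Finset.Iic j, μ i) = k →
      prodTuple (fun i => f (μ i)) ≤ prodTuple (fun i => f (ν i)) by
    exact H _ μ hμ hμn hsum hdom rfl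
  intro k
  induction k using Nat.strong_induction_on with
  | _ k IH =>
  intro μ hμ hμn hsum hdom hk
  by_cases hμν : μ = ν
  · subst hμν; exact le_rfl
  -- the first index where μ and ν differ
  have hsne : (Finset.univ.filter (fun i => μ i ≠ ν i)).Nonempty := by
    by_contra h
    apply hμν
    funext i
    by_contra hi
    exact h ⟨i, Finset.mem_filter.2 ⟨Finset.mem_univ i, hi⟩⟩
  set a : Fin (m + 1) := (Finset.univ.filter (fun i => μ i ≠ ν i)).min' hsne with ha
  have hane : μ a ≠ ν a := (Finset.mem_filter.1 ((Finset.univ.filter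
    (fun i => μ i ≠ ν i)).min'_mem hsne)).2
  have halt : ∀ i, i < a → μ i = ν i := by
    intro i hi
    by_contra h
    have hmem : i ∈ Finset.univ.filter (fun j => μ j ≠ ν j) :=
      Finset.mem_filter.2 ⟨Finset.mem_univ i, h⟩
    have h2 : a ≤ i := Finset.min'_le _ i hmem
    exact absurd h2 (not_le.2 hi)
  have hνa : ν a < μ a := by
    have := hdom a
    rw [← Finset.Iio_insert, Finset.sum_insert (by simp),
      Finset.sum_insert (by simp)] at this
    have heq : ∑ i ∈ Finset.Iio a, ν i = ∑ i ∈ Finset.Iio a, μ i :=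
      Finset.sum_congr rfl fun i hi => (halt i (Finset.mem_Iio.1 hi)).symm
    omega
  -- the first index where μ < ν
  have htne : (Finset.univ.filter (fun i => μ i < ν i)).Nonempty := by
    by_contra h
    have hle : ∀ i ∈ Finset.univ, ν i ≤ μ i := by
      intro i _
      by_contra hi
      exact h ⟨i, Finset.mem_filter.2 ⟨Finset.mem_univ i, not_le.1 hi⟩⟩
    have := Finset.sum_lt_sum hle ⟨a, Finset.mem_univ a, hνa⟩
    omega
  set b : Fin (m + 1) := (Finset.univ.filter (fun i => μ i < ν i)).min' htne with hb
  have hbl : μ b < ν b := (Finset.mem_filter.1 ((Finset.univ.filter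
    (fun i => μ i < ν i)).min'_mem htne)).2
  have hblt : ∀ i, i < b → ν i ≤ μ i := by
    intro i hi
    by_contra h
    have hmem : i ∈ Finset.univ.filter (fun j => μ j < ν j) :=
      Finset.mem_filter.2 ⟨Finset.mem_univ i, not_le.1 h⟩
    have h2 : b ≤ i := Finset.min'_le _ i hmem
    exact absurd h2 (not_le.2 hi)
  have hab : a < b := by
    rcases lt_trichotomy a b with h | h | h
    · exact h
    · rw [h] at hνa; omega
    · have := halt b h; omega
  have key3 : μ b + 2 ≤ μ a := by
    have h1 : ν b ≤ ν a := hν hab.le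
    omega
  -- a' : last index with value μ a ; b' : first index with value μ b
  have hAne : (Finset.univ.filter (fun i => μ i = μ a)).Nonempty :=
    ⟨a, Finset.mem_filter.2 ⟨Finset.mem_univ a, rfl⟩⟩
  set a' : Fin (m + 1) := (Finset.univ.filter (fun i => μ i = μ a)).max' hAne with ha'
  have ha'v : μ a' = μ a := (Finset.mem_filter.1 ((Finset.univ.filter
    (fun i => μ i = μ a)).max'_mem hAne)).2
  have haa' : a ≤ a' := by
    have hmem : a ∈ Finset.univ.filter (fun j => μ j = μ a) :=
      Finset.mem_filter.2 ⟨Finset.mem_univ a, rfl⟩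
    exact Finset.le_max' _ a hmem
  have ha'gt : ∀ i, a' < i → μ i < μ a := by
    intro i hi
    have h1 : μ i ≤ μ a := ha'v ▸ hμ hi.le
    rcases lt_or_eq_of_le h1 with h | h
    · exact h
    · have hmem : i ∈ Finset.univ.filter (fun j => μ j = μ a) :=
        Finset.mem_filter.2 ⟨Finset.mem_univ i, h⟩
      have h2 : i ≤ a' := Finset.le_max' _ i hmem
      exact absurd h2 (not_le.2 hi)
  have hBne : (Finset.univ.filter (fun i => μ i = μ b)).Nonempty :=
    ⟨b, Finset.mem_filter.2 ⟨Finset.mem_univ b, rfl⟩⟩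
  set b' : Fin (m + 1) := (Finset.univ.filter (fun i => μ i = μ b)).min' hBne with hb'
  have hb'v : μ b' = μ b := (Finset.mem_filter.1 ((Finset.univ.filter
    (fun i => μ i = μ b)).min'_mem hBne)).2
  have hbb' : b' ≤ b := by
    have hmem : b ∈ Finset.univ.filter (fun j => μ j = μ b) :=
      Finset.mem_filter.2 ⟨Finset.mem_univ b, rfl⟩
    exact Finset.min'_le _ b hmem
  have hb'lt : ∀ i, i < b' → μ b < μ i := by
    intro i hi
    have h1 : μ b ≤ μ i := hb'v ▸ hμ hi.le
    rcases lt_or_eq_of_le h1 with h | h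
    · exact h
    · have hmem : i ∈ Finset.univ.filter (fun j => μ j = μ b) :=
        Finset.mem_filter.2 ⟨Finset.mem_univ i, h.symm⟩
      have h2 : b' ≤ i := Finset.min'_le _ i hmem
      exact absurd h2 (not_le.2 hi)
  have ha'b' : a' < b' := by
    by_contra h
    have := hμ (not_lt.1 h)
    omega
  -- the new partition μ'
  set μ' : Fin (m + 1) → ℕ :=
    fun i => if i = a' then μ a - 1 else if i = b' then μ b + 1 else μ i with hμ'def
  have hμ'a' : μ' a' = μ a - 1 := by simp [hμ'def]
  have hμ'b' : μ' b' = μ b + 1 := by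
    simp only [hμ'def]
    rw [if_neg (by omega : ¬ b' = a')]
    simp
  have hμ'off : ∀ i, i ≠ a' → i ≠ b' → μ' i = μ i := by
    intro i h1 h2
    simp only [hμ'def]
    rw [if_neg h1, if_neg h2]
  -- μ' is antitone
  have hμ'anti : Antitone μ' := by
    intro i j hij
    rcases eq_or_lt_of_le hij with rfl | hij
    · exact le_rfl
    by_cases hja : j = a'
    · subst hja
      have h1 : i ≠ a' := by omega
      have h2 : i ≠ b' := by omega
      rw [hμ'off i h1 h2, hμ'a']
      have : μ a ≤ μ i := ha'v ▸ hμ hij.le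
      omega
    by_cases hjb : j = b'
    · subst hjb
      rw [hμ'b']
      by_cases hia : i = a'
      · subst hia; rw [hμ'a']; omega
      · rw [hμ'off i hia (by omega)]
        have := hb'lt i hij
        omega
    · rw [hμ'off j hja hjb]
      by_cases hia : i = a'
      · subst hia
        rw [hμ'a']
        have := ha'gt j hij
        omega
      by_cases hib : i = b'
      · subst hib
        rw [hμ'b']
        have : μ j ≤ μ b := hb'v ▸ hμ hij.le
        omega
      · rw [hμ'off i hia hib]
        exact hμ hij.le
  -- bounds
  have hμ'n : ∀ i, μ' i ≤ n := by
    intro i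
    by_cases hia : i = a'
    · subst hia; rw [hμ'a']; have := hμn a; omega
    by_cases hib : i = b'
    · subst hib; rw [hμ'b']; have := hνn b; omega
    · rw [hμ'off i hia hib]; exact hμn i
  -- partial sums
  have hS1 : ∀ j : Fin (m + 1), a' ≤ j → j < b' →
      (∑ i ∈ Finset.Iic j, μ' i) + 1 = ∑ i ∈ Finset.Iic j, μ i := by
    intro j h1 h2
    have ha'mem : a' ∈ Finset.Iic j := Finset.mem_Iic.2 h1
    rw [← Finset.add_sum_erase _ μ' ha'mem, ← Finset.add_sum_erase _ μ ha'mem]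
    have heq : ∑ i ∈ (Finset.Iic j).erase a', μ' i = ∑ i ∈ (Finset.Iic j).erase a', μ i := by
      refine Finset.sum_congr rfl fun i hi => ?_
      rcases Finset.mem_erase.1 hi with ⟨hia, hi'⟩
      have : i ≤ j := Finset.mem_Iic.1 hi'
      exact hμ'off i hia (by omega)
    rw [heq, hμ'a']
    omega
  have hS2 : ∀ j : Fin (m + 1), (j < a' ∨ b' ≤ j) →
      ∑ i ∈ Finset.Iic j, μ' i = ∑ i ∈ Finset.Iic j, μ i := by
    intro j hj
    rcases hj with hj | hj
    · refine Finset.sum_congr rfl fun i hi => ?_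
      have : i ≤ j := Finset.mem_Iic.1 hi
      exact hμ'off i (by omega) (by omega)
    · have ha'mem : a' ∈ Finset.Iic j := Finset.mem_Iic.2 (le_trans ha'b'.le hj)
      have hb'mem : b' ∈ (Finset.Iic j).erase a' :=
        Finset.mem_erase.2 ⟨by omega, Finset.mem_Iic.2 hj⟩
      rw [← Finset.add_sum_erase _ μ' ha'mem, ← Finset.add_sum_erase _ μ ha'mem,
        ← Finset.add_sum_erase _ μ' hb'mem, ← Finset.add_sum_erase _ μ hb'mem]
      have heq : ∑ i ∈ ((Finset.Iic j).erase a').erase b', μ' i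
          = ∑ i ∈ ((Finset.Iic j).erase a').erase b', μ i := by
        refine Finset.sum_congr rfl fun i hi => ?_
        rcases Finset.mem_erase.1 hi with ⟨hib, hi'⟩
        rcases Finset.mem_erase.1 hi' with ⟨hia, _⟩
        exact hμ'off i hia hib
      rw [heq, hμ'a', hμ'b']
      omega
  -- total sum
  have hsum' : ∑ i, μ' i = ∑ i, ν i := by
    have h1 := hS2 (Fin.last m) (Or.inr (Fin.le_last b'))
    rw [Iic_last_eq_univ] at h1
    omega
  -- dominance
  have hdom' : ∀ j : Fin (m + 1), ∑ i ∈ Finset.Iic j, ν i ≤ ∑ i ∈ Finset.Iic j, μ' i := by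
    intro j
    by_cases hj : a' ≤ j ∧ j < b'
    · have h1 := hS1 j hj.1 hj.2
      have h2 : ∑ i ∈ Finset.Iic j, ν i < ∑ i ∈ Finset.Iic j, μ i := by
        refine Finset.sum_lt_sum (fun i hi => ?_) ⟨a, Finset.mem_Iic.2 (le_trans haa' hj.1), hνa⟩
        have hij : i ≤ j := Finset.mem_Iic.1 hi
        exact hblt i (by omega)
      omega
    · have h1 := hS2 j (by omega)
      have := hdom j
      omega
  -- measure decreases
  have hmeas : (∑ j : Fin (m + 1), ∑ i ∈ Finset.Iic j, μ' i) < k := by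
    rw [← hk]
    refine Finset.sum_lt_sum (fun j _ => ?_) ⟨a', Finset.mem_univ a', ?_⟩
    · by_cases hj : a' ≤ j ∧ j < b'
      · have := hS1 j hj.1 hj.2; omega
      · have := hS2 j (by omega); omega
    · have := hS1 a' le_rfl ha'b'
      omega
  -- induction step
  have hIH := IH _ hmeas μ' hμ'anti hμ'n hsum' hdom' rfl
  refine le_trans ?_ hIH
  refine prodTuple_le_of_two hcompat _ _ a' b' (by omega) (fun i h1 h2 => by rw [hμ'off i h1 h2]) ?_
  rw [ha'v, hb'v, hμ'a', hμ'b']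
  have hstep := hconc (μ b + 1) (μ a - 1) (by omega) (by omega) (by have := hμn a; omega)
  have h1 : μ b + 1 - 1 = μ b := by omega
  have h2 : μ a - 1 + 1 = μ a := by omega
  rw [h1, h2] at hstep
  calc f (μ a) * f (μ b) = f (μ b) * f (μ a) := mul_comm _ _
    _ ≤ f (μ b + 1) * f (μ a - 1) := hstep
    _ = f (μ a - 1) * f (μ b + 1) := mul_comm _ _
end

section
/- Let λ be a partition with λ₁ ≤ e and let s_λ(x₁,…,x_e) be the Schur polynomial. For each i ≥ 0, the derived Schur polynomial s_λ^{[1]} satisfies the explicit formula s_λ^{[1]}(x₁,…,x_e) = ∑_μ (e − λ_i + i) s_μ(x₁,…,x_e), where μ ranges over partitions whose Young diagram is obtained from that of λ by removing one box, and for each such μ, i is the (unique) row index with μ_i = λ_i − 1. -/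
open MvPolynomial

/-- Elementary symmetric polynomial in `e` variables, indexed by an integer, with the
convention that it vanishes for negative indices (and for indices `> e`). -/
noncomputable def elemInt (e : ℕ) (k : ℤ) : MvPolynomial (Fin e) ℝ :=
  if 0 ≤ k then MvPolynomial.esymm (Fin e) ℝ k.toNat else 0

/-- The Schur polynomial `s_λ = det (c_{λ_i + j - i})_{1 ≤ i,j ≤ N}` in `e` variables. -/
noncomputable def schur (e N : ℕ) (lam : Fin N → ℕ) : MvPolynomial (Fin e) ℝ :=
  Matrix.det (Matrix.of fun i j : Fin N =>
    elemInt e ((lam i : ℤ) + (j : ℤ) - (i : ℤ)))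

/-- The substitution `xᵢ ↦ xᵢ + t`, valued in polynomials in `t` over `ℝ[x₁,…,x_e]`. -/
noncomputable def shiftMap (e : ℕ) :
    MvPolynomial (Fin e) ℝ →ₐ[ℝ] Polynomial (MvPolynomial (Fin e) ℝ) :=
  MvPolynomial.aeval fun i => Polynomial.C (MvPolynomial.X i) + Polynomial.X

/-- The derived polynomial `s^{[i]}`: the coefficient of `tⁱ` in `s(x₁+t, …, x_e+t)`. -/
noncomputable def derPoly (e : ℕ) (i : ℕ) (s : MvPolynomial (Fin e) ℝ) :
    MvPolynomial (Fin e) ℝ :=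
  ((shiftMap e) s).coeff i

lemma coeff_zero_prod {ι R : Type*} [CommRing R] (s : Finset ι) (f : ι → Polynomial R) :
    (∏ i ∈ s, f i).coeff 0 = ∏ i ∈ s, (f i).coeff 0 := by
  simp [Polynomial.coeff_zero_eq_eval_zero, Polynomial.eval_prod]

lemma coeff_one_prod {ι R : Type*} [CommRing R] [DecidableEq ι] (s : Finset ι)
    (f : ι → Polynomial R) :
    (∏ i ∈ s, f i).coeff 1 = ∑ i ∈ s, (f i).coeff 1 * ∏ j ∈ s.erase i, (f j).coeff 0 := by
  classical
  induction s using Finset.induction_on with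
  | empty => simp [Polynomial.coeff_one]
  | insert a s ha ih =>
    rw [Finset.prod_insert ha, Finset.sum_insert ha]
    have hmul : ∀ p q : Polynomial R, (p * q).coeff 1 =
        p.coeff 0 * q.coeff 1 + p.coeff 1 * q.coeff 0 := by
      intro p q
      rw [Polynomial.coeff_mul]
      rw [show Finset.HasAntidiagonal.antidiagonal (1 : ℕ) = {(0,1), (1,0)} by decide]
      simp
    rw [hmul, ih, Finset.mul_sum, Finset.erase_insert ha, add_comm, coeff_zero_prod]
    congr 1
    refine Finset.sum_congr rfl fun i hi => ?_
    rw [Finset.erase_insert_of_ne (by rintro rfl; exact ha hi)]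
    rw [Finset.prod_insert (fun h => ha (Finset.erase_subset _ _ h))]
    ring

lemma coeff_one_det {n : ℕ} {R : Type*} [CommRing R] (P : Matrix (Fin n) (Fin n) (Polynomial R)) :
    P.det.coeff 1 = ∑ r : Fin n,
      ((P.map (fun p => p.coeff 0)).updateRow r (fun j => (P r j).coeff 1)).det := by
  classical
  rw [Matrix.det_apply']
  rw [Polynomial.finset_sum_coeff]
  simp_rw [Polynomial.coeff_intCast_mul, Matrix.det_apply']
  rw [Finset.sum_comm]
  refine Finset.sum_congr rfl fun σ _ => ?_
  rw [coeff_one_prod, Finset.mul_sum]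
  refine (Equiv.sum_comp σ _).symm.trans (Finset.sum_congr rfl fun i _ => ?_) |>.symm
  rw [← Finset.mul_prod_erase Finset.univ _ (Finset.mem_univ i)]
  rw [Matrix.updateRow_self]
  have : ∀ k ∈ Finset.univ.erase i,
      ((P.map (fun p => p.coeff 0)).updateRow (σ i) (fun j => (P (σ i) j).coeff 1)) (σ k) k
        = (P (σ k) k).coeff 0 := by
    intro k hk
    rw [Matrix.updateRow_ne (fun h => (Finset.mem_erase.mp hk).1 (σ.injective h))]
    rfl
  rw [Finset.prod_congr rfl this]

lemma shift_coeff_zero (e : ℕ) (p : MvPolynomial (Fin e) ℝ) :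
    ((shiftMap e) p).coeff 0 = p := by
  have : (Polynomial.constantCoeff).comp (shiftMap e).toRingHom
      = RingHom.id (MvPolynomial (Fin e) ℝ) := by
    apply MvPolynomial.ringHom_ext
    · intro r
      simp [shiftMap]
    · intro i
      simp [shiftMap]
  simpa [Polynomial.constantCoeff_apply] using congrFun (congrArg (fun f => f.toFun) this) p

lemma shift_esymm_coeff_one (e n : ℕ) (hn : 1 ≤ n) :
    ((shiftMap e) (esymm (Fin e) ℝ n)).coeff 1
      = MvPolynomial.C ((e : ℝ) - n + 1) * esymm (Fin e) ℝ (n - 1) := by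
  classical
  rw [esymm, map_sum, Polynomial.finset_sum_coeff]
  have hterm : ∀ S ∈ Finset.powersetCard n (Finset.univ : Finset (Fin e)),
      ((shiftMap e) (∏ i ∈ S, X i)).coeff 1 = ∑ i ∈ S, ∏ j ∈ S.erase i, X j := by
    intro S _
    rw [map_prod, coeff_one_prod]
    refine Finset.sum_congr rfl fun i hi => ?_
    have h1 : ((shiftMap e) (X i)).coeff 1 = 1 := by simp [shiftMap]
    rw [h1, one_mul]
    refine Finset.prod_congr rfl fun j hj => ?_
    simp [shiftMap]
  rw [Finset.sum_congr rfl hterm]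
  have key : ∑ S ∈ Finset.powersetCard n (Finset.univ : Finset (Fin e)),
        ∑ i ∈ S, ∏ j ∈ S.erase i, X j
      = ∑ T ∈ Finset.powersetCard (n-1) (Finset.univ : Finset (Fin e)),
        ∑ _i ∈ (Finset.univ \ T), (∏ j ∈ T, X j : MvPolynomial (Fin e) ℝ) := by
    rw [Finset.sum_sigma', Finset.sum_sigma']
    refine Finset.sum_nbij' (fun p => ⟨p.1.erase p.2, p.2⟩) (fun q => ⟨insert q.2 q.1, q.2⟩)
      ?_ ?_ ?_ ?_ ?_
    · rintro ⟨S, i⟩ hp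
      simp only [Finset.mem_sigma, Finset.mem_powersetCard_univ] at hp ⊢
      obtain ⟨hS, hi⟩ := hp
      refine ⟨by rw [Finset.card_erase_of_mem hi, hS], ?_⟩
      simp [Finset.mem_sdiff]
    · rintro ⟨T, i⟩ hq
      simp only [Finset.mem_sigma, Finset.mem_powersetCard_univ, Finset.mem_sdiff] at hq ⊢
      obtain ⟨hT, -, hi⟩ := hq
      refine ⟨?_, Finset.mem_insert_self _ _⟩
      rw [Finset.card_insert_of_notMem hi, hT, Nat.sub_add_cancel hn]
    · rintro ⟨S, i⟩ hp
      simp only [Finset.mem_sigma, Finset.mem_powersetCard_univ] at hp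
      simp [Finset.insert_erase hp.2]
    · rintro ⟨T, i⟩ hq
      simp only [Finset.mem_sigma, Finset.mem_powersetCard_univ, Finset.mem_sdiff] at hq
      simp [Finset.erase_insert hq.2.2]
    · rintro ⟨S, i⟩ hp
      rfl
  rw [key]
  simp only [Finset.sum_const]
  rw [esymm, Finset.mul_sum]
  refine Finset.sum_congr rfl fun T hT => ?_
  rw [Finset.mem_powersetCard_univ] at hT
  have hcard : (Finset.univ \ T).card = e - (n - 1) := by
    rw [Finset.card_sdiff_of_subset (Finset.subset_univ T), hT, Finset.card_univ, Fintype.card_fin]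
  have hne : n - 1 ≤ e := by
    by_contra h
    push_neg at h
    have := hT ▸ Finset.card_le_univ T
    simp [Finset.card_univ] at this
    omega
  rw [hcard]
  have hcast : ((e - (n - 1) : ℕ) : ℝ) = (e : ℝ) - n + 1 := by
    rw [Nat.cast_sub hne, Nat.cast_sub hn]
    push_cast
    ring
  rw [← Nat.cast_smul_eq_nsmul ℝ, hcast, smul_eq_C_mul]

lemma shift_elemInt_coeff_one (e : ℕ) (k : ℤ) :
    ((shiftMap e) (elemInt e k)).coeff 1
      = MvPolynomial.C ((e : ℝ) - k + 1) * elemInt e (k - 1) := by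
  rcases lt_trichotomy k 0 with hk | hk | hk
  · rw [elemInt, if_neg (not_le.mpr hk), elemInt, if_neg (by omega)]
    simp
  · subst hk
    rw [elemInt, if_pos le_rfl, elemInt, if_neg (by omega)]
    simp [Polynomial.coeff_one]
  · have h0 : (0:ℤ) ≤ k := le_of_lt hk
    have h1 : (0:ℤ) ≤ k - 1 := by omega
    rw [elemInt, if_pos h0, elemInt, if_pos h1]
    have hn : 1 ≤ k.toNat := by omega
    rw [shift_esymm_coeff_one e k.toNat hn]
    have h2 : (k - 1).toNat = k.toNat - 1 := by omega
    have h3 : ((k.toNat : ℕ) : ℝ) = ((k : ℤ) : ℝ) := by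
      have h4 := Int.toNat_of_nonneg h0
      exact_mod_cast congrArg (fun z : ℤ => (z : ℝ)) h4
    rw [h2, h3]

lemma det_updateRow_eq_sum {n : ℕ} {R : Type*} [CommRing R] (M : Matrix (Fin n) (Fin n) R)
    (i : Fin n) (v : Fin n → R) :
    (M.updateRow i v).det = ∑ j, v j * M.adjugate j i := by
  rw [← Matrix.cramer_transpose_apply]
  conv_lhs => rw [show v = ∑ j, Pi.single j (v j) from (Finset.univ_sum_single v).symm]
  rw [map_sum]
  rw [Finset.sum_apply]
  refine Finset.sum_congr rfl fun j _ => ?_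
  have h1 : Pi.single j (v j) = v j • (Pi.single j 1 : Fin n → R) := by
    ext k
    by_cases h : k = j <;> simp [h, Pi.single_apply]
  rw [h1, map_smul]
  simp only [Pi.smul_apply, smul_eq_mul]
  congr 1

/-- for a partition `λ` with `λ₁ ≤ e`, the derived Schur polynomial
satisfies `s_λ^{[1]} = ∑_μ (e - λ_i + i) s_μ`, where `μ` runs over partitions obtained from
`λ` by removing one box, removed from row `i` (1-based; here the row index `i : Fin N` is
0-based, so the coefficient is `e - λ_i + (i + 1)`, and removability of a box in row `i`
means `λ_i > 0` and `λ_j < λ_i` for all rows `j > i`). -/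
theorem stmt_10 (e N : ℕ) (lam : Fin N → ℕ) (hanti : Antitone lam)
    (hle : ∀ i, lam i ≤ e) :
    derPoly e 1 (schur e N lam) =
      ∑ i ∈ Finset.univ.filter
          (fun i : Fin N => 0 < lam i ∧ ∀ j : Fin N, i < j → lam j < lam i),
        MvPolynomial.C ((e : ℝ) - (lam i : ℝ) + ((i : ℕ) + 1 : ℝ)) *
          schur e N (fun j => if j = i then lam i - 1 else lam j) := by
  classical
  set A : Matrix (Fin N) (Fin N) (MvPolynomial (Fin e) ℝ) :=
    Matrix.of (fun i j : Fin N => elemInt e ((lam i : ℤ) + (j : ℤ) - (i : ℤ))) with hA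
  set B : Matrix (Fin N) (Fin N) (MvPolynomial (Fin e) ℝ) :=
    Matrix.of (fun i j : Fin N => elemInt e ((lam i : ℤ) + (j : ℤ) - (i : ℤ) - 1)) with hB
  -- step 1: derPoly as a sum of determinants of row-modified matrices
  have step1 : derPoly e 1 (schur e N lam) = ∑ r : Fin N,
      (A.updateRow r (fun j => ((shiftMap e) (A r j)).coeff 1)).det := by
    rw [derPoly, schur]
    rw [show (shiftMap e) A.det = (A.map (shiftMap e)).det from
      RingHom.map_det (shiftMap e).toRingHom A]
    rw [coeff_one_det]
    have hmap : (A.map (shiftMap e)).map (fun p => p.coeff 0) = A := by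
      ext i j
      rw [Matrix.map_apply, Matrix.map_apply, shift_coeff_zero]
    rw [hmap]
    rfl
  -- the coefficient-one rows
  have hrow : ∀ (r j : Fin N), ((shiftMap e) (A r j)).coeff 1 =
      MvPolynomial.C ((e : ℝ) - (lam r : ℝ) + ((r : ℕ) + 1 : ℝ)) * B r j
        - MvPolynomial.C (((j : ℕ) : ℝ)) * B r j := by
    intro r j
    have : A r j = elemInt e ((lam r : ℤ) + (j : ℤ) - (r : ℤ)) := rfl
    rw [this, shift_elemInt_coeff_one]
    have hBrj : elemInt e ((lam r : ℤ) + (j : ℤ) - (r : ℤ) - 1) = B r j := rfl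
    rw [hBrj, ← sub_mul, ← map_sub]
    congr 2
    push_cast
    ring
  rw [step1]
  have step2 : ∀ r : Fin N,
      (A.updateRow r (fun j => ((shiftMap e) (A r j)).coeff 1)).det
        = MvPolynomial.C ((e : ℝ) - (lam r : ℝ) + ((r : ℕ) + 1 : ℝ)) *
            (A.updateRow r (fun j => B r j)).det
          - ∑ j : Fin N, MvPolynomial.C (((j : ℕ) : ℝ)) * (B r j * A.adjugate j r) := by
    intro r
    rw [det_updateRow_eq_sum, det_updateRow_eq_sum]
    simp_rw [hrow, sub_mul, Finset.sum_sub_distrib, Finset.mul_sum]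
    refine congrArg₂ (· - ·) ?_ ?_
    · refine Finset.sum_congr rfl fun j _ => ?_
      ring
    · refine Finset.sum_congr rfl fun j _ => ?_
      ring
  simp_rw [step2, Finset.sum_sub_distrib]
  -- the second sum vanishes
  have step3 : ∑ r : Fin N, ∑ j : Fin N,
      MvPolynomial.C (((j : ℕ) : ℝ)) * (B r j * A.adjugate j r) = 0 := by
    rw [Finset.sum_comm]
    refine Finset.sum_eq_zero fun j _ => ?_
    rcases Nat.eq_zero_or_pos (j : ℕ) with hj | hj
    · simp [hj]
    · have hj1 : (j : ℕ) - 1 < N := lt_of_le_of_lt (Nat.sub_le _ _) j.isLt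
      set j' : Fin N := ⟨(j : ℕ) - 1, hj1⟩ with hj'
      have hBA : ∀ r, B r j = A r j' := by
        intro r
        show elemInt e _ = elemInt e _
        congr 1
        have hv : (j' : ℕ) = (j : ℕ) - 1 := rfl
        omega
      have : ∑ r : Fin N, MvPolynomial.C (((j : ℕ) : ℝ)) * (B r j * A.adjugate j r)
          = MvPolynomial.C (((j : ℕ) : ℝ)) * ((A.adjugate * A) j j') := by
        rw [Matrix.mul_apply, Finset.mul_sum]
        refine Finset.sum_congr rfl fun r _ => ?_
        rw [hBA r]
        ring
      rw [this, Matrix.adjugate_mul]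
      have hjj' : j ≠ j' := by
        intro h
        have := congrArg Fin.val h
        simp [hj'] at this
        omega
      simp [Matrix.smul_apply, Matrix.one_apply, hjj']
  rw [step3, sub_zero]
  -- final combinatorial identification
  rw [Finset.sum_filter]
  refine Finset.sum_congr rfl fun r _ => ?_
  by_cases hval : 0 < lam r ∧ ∀ j : Fin N, r < j → lam j < lam r
  · rw [if_pos hval]
    congr 1
    rw [schur]
    congr 1
    refine Matrix.ext fun i j => ?_
    by_cases hir : i = r
    · subst hir
      rw [Matrix.updateRow_self]
      show elemInt e _ = elemInt e _
      congr 1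
      have : ((lam i - 1 : ℕ) : ℤ) = (lam i : ℤ) - 1 := by
        have := hval.1
        omega
      rw [if_pos rfl]
      omega
    · rw [Matrix.updateRow_ne hir]
      show elemInt e _ = elemInt e _
      congr 1
      simp only [if_neg hir]
  · rw [if_neg hval]
    have hdet0 : (A.updateRow r (fun j => B r j)).det = 0 := by
      by_cases hr : (r : ℕ) + 1 < N
      · set r' : Fin N := ⟨(r : ℕ) + 1, hr⟩ with hr'
        have hrr' : r < r' := by
          rw [Fin.lt_def]; simp [hr']
        have hlam : lam r' = lam r := by
          rcases Nat.eq_zero_or_pos (lam r) with h0 | h0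
          · have := hanti (le_of_lt hrr')
            omega
          · push_neg at hval
            obtain ⟨jj, hjj, hge⟩ := hval h0
            have h1 : lam jj ≤ lam r' := hanti (by
              rw [Fin.le_def]
              have h5 := Fin.lt_def.mp hjj
              have h6 : (r' : ℕ) = (r : ℕ) + 1 := rfl
              omega)
            have h2 : lam r' ≤ lam r := hanti (le_of_lt hrr')
            omega
        apply Matrix.det_zero_of_row_eq (ne_of_lt hrr')
        funext j
        rw [Matrix.updateRow_self, Matrix.updateRow_ne (ne_of_gt hrr')]
        show elemInt e _ = elemInt e _
        congr 1
        have h6 : (r' : ℕ) = (r : ℕ) + 1 := rfl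
        rw [hlam]
        omega
      · -- r is the last row and lam r = 0
        have h0 : lam r = 0 := by
          by_contra h
          refine hval ⟨Nat.pos_of_ne_zero h, fun j hj => ?_⟩
          exfalso
          have h1 := Fin.lt_def.mp hj
          have h2 := j.isLt
          omega
        apply Matrix.det_eq_zero_of_row_eq_zero r
        intro j
        rw [Matrix.updateRow_self]
        show elemInt e ((lam r : ℤ) + (j : ℤ) - (r : ℤ) - 1) = 0
        have h2 := j.isLt
        simp only [elemInt]
        rw [if_neg (by omega)]
    rw [hdet0, mul_zero]
end

section
/- Let f(x,y) = x³ + 2x²y + 4xy² + 8y³. Then f is dually Lorentzian, but the polynomial (f^{[1]})² − f^{[0]} f^{[2]} = 14x⁴ + 64x³y + 312x²y² + 448xy³ + 512y⁴ is not dually Lorentzian. -/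
open MvPolynomial

/-- The substitution `(x,y) ↦ (x+t, y+t)`, valued in polynomials in `t`. -/
noncomputable def shiftMap2 :
    MvPolynomial (Fin 2) ℝ →ₐ[ℝ] Polynomial (MvPolynomial (Fin 2) ℝ) :=
  MvPolynomial.aeval fun i => Polynomial.C (MvPolynomial.X i) + Polynomial.X

/-- The derived polynomial `f^{[i]}`: the coefficient of `tⁱ` in `f(x+t, y+t)`. -/
noncomputable def der2 (i : ℕ) (f : MvPolynomial (Fin 2) ℝ) : MvPolynomial (Fin 2) ℝ :=
  (shiftMap2 f).coeff i

/-- A sequence `c₀,…,c_d` is log-concave with no internal zeroes. -/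
def LogConcaveNoIZ (d : ℕ) (c : ℕ → ℝ) : Prop :=
  (∀ i : ℕ, 0 < i → i < d → c (i - 1) * c (i + 1) ≤ c i ^ 2) ∧
  ¬ ∃ i j k : ℕ, i < j ∧ j < k ∧ k ≤ d ∧ c i ≠ 0 ∧ c j = 0 ∧ c k ≠ 0

/-- A bivariate homogeneous polynomial of degree `d` with coefficient sequence `c`
(`cᵢ` the coefficient of `xⁱ y^{d-i}`) is Lorentzian iff all `cᵢ ≥ 0` and the normalized
coefficients `cᵢ / C(d,i)` form a log-concave sequence with no internal zeroes. -/
def IsLorentzianCoeff (d : ℕ) (c : ℕ → ℝ) : Prop :=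
  (∀ i, 0 ≤ c i) ∧ LogConcaveNoIZ d fun i => c i / (d.choose i : ℝ)

/-- The coefficient of `xⁱ y^{d-i}` in a bivariate polynomial. -/
noncomputable def coeffSeq (d : ℕ) (f : MvPolynomial (Fin 2) ℝ) (i : ℕ) : ℝ :=
  MvPolynomial.coeff (Finsupp.single 0 i + Finsupp.single 1 (d - i)) f

/-- The coefficient sequence of the dual `f^∨(x,y) = N(x^d y^d f(1/x, 1/y))` of a
homogeneous bivariate polynomial of degree `d` (taking `(κ₁,κ₂) = (d,d)`), where the
normalization operator `N` sends `x^a y^b` to `x^a y^b / (a! b!)`; `f^∨` is again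
homogeneous of degree `d`, with coefficient of `x^a y^{d-a}` equal to
`c_{d-a} / (a! (d-a)!)`. -/
noncomputable def dualCoeff (d : ℕ) (f : MvPolynomial (Fin 2) ℝ) (a : ℕ) : ℝ :=
  coeffSeq d f (d - a) / ((a.factorial : ℝ) * ((d - a).factorial : ℝ))

/-- `f` is dually Lorentzian: it is homogeneous of degree `d` and its dual is Lorentzian. -/
def IsDuallyLorentzianBiv (d : ℕ) (f : MvPolynomial (Fin 2) ℝ) : Prop :=
  f.IsHomogeneous d ∧ IsLorentzianCoeff d (dualCoeff d f)

/-- Auxiliary: `C c * x^a * y^b` as a monomial. -/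
lemma stmt16_mono_eq (a b : ℕ) (c : ℝ) :
    C c * X 0 ^ a * X 1 ^ b =
      monomial (Finsupp.single (0:Fin 2) a + Finsupp.single 1 b) c := by
  rw [X_pow_eq_monomial, X_pow_eq_monomial, mul_assoc, monomial_mul, one_mul,
    C_mul_monomial, mul_one]

/-- Auxiliary: equality of bivariate exponent vectors. -/
lemma stmt16_pair_eq (a b c d : ℕ) :
    (Finsupp.single (0 : Fin 2) a + Finsupp.single 1 b) =
      Finsupp.single 0 c + Finsupp.single 1 d ↔ a = c ∧ b = d := by
  constructor
  · intro h
    have h0 := DFunLike.congr_fun h 0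
    have h1 := DFunLike.congr_fun h 1
    simp [Finsupp.single_apply] at h0 h1
    exact ⟨h0, h1⟩
  · rintro ⟨rfl, rfl⟩; rfl

/-- Auxiliary: coefficient extraction for monomials. -/
lemma stmt16_coeff_mono (i j a b : ℕ) (c : ℝ) :
    MvPolynomial.coeff (Finsupp.single (0:Fin 2) i + Finsupp.single 1 j)
      (C c * X 0 ^ a * X 1 ^ b) = if a = i ∧ b = j then c else 0 := by
  rw [stmt16_mono_eq, coeff_monomial]
  simp [stmt16_pair_eq]

/-- Auxiliary: `C c * x^a * y^b` is homogeneous of degree `a + b`. -/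
lemma stmt16_homog_mono (a b : ℕ) (c : ℝ) :
    (C c * X 0 ^ a * X 1 ^ b : MvPolynomial (Fin 2) ℝ).IsHomogeneous (a + b) := by
  rw [stmt16_mono_eq]
  apply isHomogeneous_monomial
  rw [map_add, Finsupp.degree_single, Finsupp.degree_single]

/-- `f = x³ + 2x²y + 4xy² + 8y³` is dually Lorentzian, but
`(f^{[1]})² - f^{[0]} f^{[2]} = 14x⁴ + 64x³y + 312x²y² + 448xy³ + 512y⁴` is not
dually Lorentzian. -/
theorem stmt_16 :
    let x : MvPolynomial (Fin 2) ℝ := X 0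
    let y : MvPolynomial (Fin 2) ℝ := X 1
    let f := x ^ 3 + C 2 * x ^ 2 * y + C 4 * x * y ^ 2 + C 8 * y ^ 3
    IsDuallyLorentzianBiv 3 f ∧
    (der2 1 f) ^ 2 - der2 0 f * der2 2 f =
      C 14 * x ^ 4 + C 64 * x ^ 3 * y + C 312 * x ^ 2 * y ^ 2 +
        C 448 * x * y ^ 3 + C 512 * y ^ 4 ∧
    ¬ IsDuallyLorentzianBiv 4 ((der2 1 f) ^ 2 - der2 0 f * der2 2 f) := by
  intro x y f
  -- f as sum of monomials
  have hfm : f = C 1 * X 0 ^ 3 * X 1 ^ 0 + C 2 * X 0 ^ 2 * X 1 ^ 1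
      + C 4 * X 0 ^ 1 * X 1 ^ 2 + C 8 * X 0 ^ 0 * X 1 ^ 3 := by
    simp only [f, x, y, map_one, one_mul]; ring
  -- coefficient values of f
  have hc0 : coeffSeq 3 f 0 = 8 := by
    rw [coeffSeq, hfm]; simp only [coeff_add, stmt16_coeff_mono]; norm_num
  have hc1 : coeffSeq 3 f 1 = 4 := by
    rw [coeffSeq, hfm]; simp only [coeff_add, stmt16_coeff_mono]; norm_num
  have hc2 : coeffSeq 3 f 2 = 2 := by
    rw [coeffSeq, hfm]; simp only [coeff_add, stmt16_coeff_mono]; norm_num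
  have hc3 : coeffSeq 3 f 3 = 1 := by
    rw [coeffSeq, hfm]; simp only [coeff_add, stmt16_coeff_mono]; norm_num
  -- the shift of f
  have hshift : shiftMap2 f = Polynomial.C f
      + Polynomial.C (C 5 * x ^ 2 + C 12 * x * y + C 28 * y ^ 2) * Polynomial.X
      + Polynomial.C (C 11 * x + C 34 * y) * Polynomial.X ^ 2
      + Polynomial.C (C 15) * Polynomial.X ^ 3 := by
    simp only [shiftMap2, f, x, y, map_add, map_mul, map_pow, aeval_X, aeval_C, map_ofNat]
    ring
  have hd0 : der2 0 f = f := by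
    rw [der2, hshift]
    simp only [Polynomial.coeff_add, Polynomial.coeff_C_mul, Polynomial.coeff_X_pow,
      Polynomial.coeff_X, Polynomial.coeff_C]
    norm_num
  have hd1 : der2 1 f = C 5 * x ^ 2 + C 12 * x * y + C 28 * y ^ 2 := by
    rw [der2, hshift]
    simp only [Polynomial.coeff_add, Polynomial.coeff_C_mul, Polynomial.coeff_X_pow,
      Polynomial.coeff_X, Polynomial.coeff_C]
    norm_num
  have hd2 : der2 2 f = C 11 * x + C 34 * y := by
    rw [der2, hshift]
    simp only [Polynomial.coeff_add, Polynomial.coeff_C_mul, Polynomial.coeff_X_pow,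
      Polynomial.coeff_X, Polynomial.coeff_C]
    norm_num
  -- part 2
  have h2 : (der2 1 f) ^ 2 - der2 0 f * der2 2 f =
      C 14 * x ^ 4 + C 64 * x ^ 3 * y + C 312 * x ^ 2 * y ^ 2 +
        C 448 * x * y ^ 3 + C 512 * y ^ 4 := by
    rw [hd0, hd1, hd2]
    simp only [f, x, y, map_ofNat]
    ring
  refine ⟨⟨?_, ?_, ?_, ?_⟩, h2, ?_⟩
  · -- homogeneity of f
    rw [hfm]
    exact ((((stmt16_homog_mono 3 0 1).add (stmt16_homog_mono 2 1 2)).add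
      (stmt16_homog_mono 1 2 4)).add (stmt16_homog_mono 0 3 8))
  · -- nonnegativity of dual coefficients
    intro a
    rw [dualCoeff]
    apply div_nonneg _ (by positivity)
    match a with
    | 0 => rw [show 3 - 0 = 3 from rfl, hc3]; norm_num
    | 1 => rw [show 3 - 1 = 2 from rfl, hc2]; norm_num
    | 2 => rw [show 3 - 2 = 1 from rfl, hc1]; norm_num
    | (n + 3) => rw [show 3 - (n + 3) = 0 by omega, hc0]; norm_num
  · -- log-concavity
    intro i hi hi'
    interval_cases i
    · simp only [dualCoeff]
      norm_num [hc0, hc1, hc2, hc3, Nat.factorial, Nat.choose]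
    · simp only [dualCoeff]
      norm_num [hc0, hc1, hc2, hc3, Nat.factorial, Nat.choose]
  · -- no internal zeroes
    rintro ⟨i, j, k, hij, hjk, hk, -, hj, -⟩
    have hj12 : j = 1 ∨ j = 2 := by omega
    rcases hj12 with rfl | rfl
    · simp only [dualCoeff, show 3 - 1 = 2 from rfl, hc2] at hj
      norm_num [Nat.factorial, Nat.choose] at hj
    · simp only [dualCoeff, show 3 - 2 = 1 from rfl, hc1] at hj
      norm_num [Nat.factorial, Nat.choose] at hj
  · -- g is not dually Lorentzian
    rintro ⟨-, -, hlc, -⟩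
    have hgm : (der2 1 f) ^ 2 - der2 0 f * der2 2 f =
        C 14 * X 0 ^ 4 * X 1 ^ 0 + C 64 * X 0 ^ 3 * X 1 ^ 1 + C 312 * X 0 ^ 2 * X 1 ^ 2
          + C 448 * X 0 ^ 1 * X 1 ^ 3 + C 512 * X 0 ^ 0 * X 1 ^ 4 := by
      rw [h2]; simp only [x, y]; ring
    have hg4 : coeffSeq 4 ((der2 1 f) ^ 2 - der2 0 f * der2 2 f) 4 = 14 := by
      rw [coeffSeq, hgm]; simp only [coeff_add, stmt16_coeff_mono]; norm_num
    have hg3 : coeffSeq 4 ((der2 1 f) ^ 2 - der2 0 f * der2 2 f) 3 = 64 := by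
      rw [coeffSeq, hgm]; simp only [coeff_add, stmt16_coeff_mono]; norm_num
    have hg2 : coeffSeq 4 ((der2 1 f) ^ 2 - der2 0 f * der2 2 f) 2 = 312 := by
      rw [coeffSeq, hgm]; simp only [coeff_add, stmt16_coeff_mono]; norm_num
    have := hlc 1 (by norm_num) (by norm_num)
    simp only [dualCoeff] at this
    rw [show 4 - 0 = 4 from rfl, show 4 - 1 = 3 from rfl, show (1:ℕ) - 1 = 0 from rfl,
      show 4 - 2 = 2 from rfl, show (1:ℕ) + 1 = 2 from rfl, hg4, hg3, hg2] at this
    norm_num [Nat.factorial, Nat.choose] at this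
end

section
/- For f = x² + 3xy + 9y², the 3×3 determinant det [[f^{[1]}(1,0), f^{[2]}(1,0), 0], [f^{[0]}(1,0), f^{[1]}(1,0), f^{[2]}(1,0)], [0, f^{[0]}(1,0), f^{[1]}(1,0)]] equals −5; in particular the sequence (f^{[0]}(1,0), f^{[1]}(1,0), f^{[2]}(1,0)) = (1, 5, 13) is not a Pólya frequency sequence. -/
open MvPolynomial

/-- The extension by zero of a finite sequence `a₀,…,a_n` to all integers. -/
noncomputable def extSeq (n : ℕ) (a : ℕ → ℝ) (k : ℤ) : ℝ :=
  if 0 ≤ k ∧ k ≤ (n : ℤ) then a k.toNat else 0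

/-- `a₀,…,a_n` is a Pólya frequency sequence: all minors of the Toeplitz matrix
`(a_{j-i})` are nonnegative. -/
def IsPolyaFrequency (n : ℕ) (a : ℕ → ℝ) : Prop :=
  ∀ (p : ℕ) (r c : Fin p → ℕ), StrictMono r → StrictMono c →
    0 ≤ Matrix.det (Matrix.of fun i j : Fin p => extSeq n a ((c j : ℤ) - (r i : ℤ)))

theorem aval (i : ℕ) : MvPolynomial.eval (fun j : Fin 2 => if j = 0 then (1 : ℝ) else 0)
    (der2 i (X 0 ^ 2 + C 3 * X 0 * X 1 + C 9 * X 1 ^ 2)) =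
    if i = 0 then 1 else if i = 1 then 5 else if i = 2 then 13 else 0 := by
  have h : shiftMap2 ((X 0 ^ 2 + C 3 * X 0 * X 1 + C 9 * X 1 ^ 2 : MvPolynomial (Fin 2) ℝ)) =
      Polynomial.C (X 0 ^ 2 + C 3 * X 0 * X 1 + C 9 * X 1 ^ 2) +
      Polynomial.C (C 5 * X 0 + C 21 * X 1) * Polynomial.X +
      Polynomial.C (C 13) * Polynomial.X ^ 2 := by
    simp [shiftMap2, map_ofNat]
    ring
  rw [der2, h]
  match i with
  | 0 => simp [← Polynomial.C_pow, -map_pow]; norm_num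
  | 1 => norm_num [Polynomial.coeff_add, Polynomial.coeff_C_mul, Polynomial.coeff_X,
      Polynomial.coeff_X_pow, Polynomial.coeff_C, ← Polynomial.C_pow, -map_pow]
  | 2 => norm_num [Polynomial.coeff_add, Polynomial.coeff_C_mul, Polynomial.coeff_X,
      Polynomial.coeff_X_pow, Polynomial.coeff_C, ← Polynomial.C_pow, -map_pow]
  | (n+3) =>
    have h1 : ¬(n+3=1) := by omega
    have h2 : ¬(n+3=2) := by omega
    norm_num [Polynomial.coeff_add, Polynomial.coeff_C_mul, Polynomial.coeff_X,
      Polynomial.coeff_X_pow, Polynomial.coeff_C, ← Polynomial.C_pow, -map_pow, h1, h2]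


/-- for `f = x² + 3xy + 9y²`, the displayed `3×3` Toeplitz minor of the
sequence `(f^{[0]}(1,0), f^{[1]}(1,0), f^{[2]}(1,0)) = (1, 5, 13)` equals `-5`; in
particular this sequence is not a Pólya frequency sequence. -/
theorem stmt_17 :
    let f : MvPolynomial (Fin 2) ℝ := X 0 ^ 2 + C 3 * X 0 * X 1 + C 9 * X 1 ^ 2
    let a : ℕ → ℝ := fun i =>
      MvPolynomial.eval (fun j : Fin 2 => if j = 0 then (1 : ℝ) else 0) (der2 i f)
    a 0 = 1 ∧ a 1 = 5 ∧ a 2 = 13 ∧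
    Matrix.det !![a 1, a 2, 0; a 0, a 1, a 2; 0, a 0, a 1] = -5 ∧
    ¬ IsPolyaFrequency 2 a := by
  intro f a
  have h0 : a 0 = 1 := by simpa using aval 0
  have h1 : a 1 = 5 := by simpa using aval 1
  have h2 : a 2 = 13 := by simpa using aval 2
  refine ⟨h0, h1, h2, ?_, ?_⟩
  · rw [Matrix.det_fin_three]
    simp [h0, h1, h2]
    norm_num
  · intro hPF
    have hc : StrictMono (fun j : Fin 3 => (j : ℕ) + 1) := by
      intro x y hxy
      simp only [Fin.lt_def] at hxy
      simpa using Nat.add_lt_add_right hxy 1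
    have := hPF 3 (fun i => (i : ℕ)) (fun j => (j : ℕ) + 1)
      (fun x y hxy => hxy) hc
    rw [Matrix.det_fin_three] at this
    simp only [Matrix.of_apply] at this
    norm_num [extSeq] at this
    rw [show Int.toNat 2 = 2 from rfl, h0, h1, h2] at this
    linarith
end

section
/- Let m ≥ 1 and let f₀, f₁, f₂, f₃ be the polynomials (4x²y, (x+y)², x+y, 1) in ℝ[x,y]. Then f₁² − f₀f₂ and f₂² − f₁f₃ are monomial-positive (all coefficients nonnegative), but f₁f₂ − f₀f₃ = x³ − x²y + 3xy² + y³ is not monomial-positive. Hence the analogue of the characterization 'log-concave with no internal zeroes implies b_i b_j ≥ b_{i−1} b_{j+1}' fails when nonnegative reals are replaced by monomial-positive polynomials. -/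
open MvPolynomial

/-- for the sequence of polynomials
`(f₀, f₁, f₂, f₃) = (4x²y, (x+y)², x+y, 1)` in `ℝ[x,y]`, the differences `f₁² - f₀f₂` and
`f₂² - f₁f₃` are monomial-positive, but `f₁f₂ - f₀f₃ = x³ - x²y + 3xy² + y³` is not
monomial-positive. Hence the analogue of `log-concave with no internal zeroes ⟹
bᵢbⱼ ≥ b_{i-1}b_{j+1}` fails for monomial-positive polynomials in place of nonnegative
reals. -/
theorem stmt_19 :
    let x : MvPolynomial (Fin 2) ℝ := X 0
    let y : MvPolynomial (Fin 2) ℝ := X 1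
    let f0 := C 4 * x ^ 2 * y
    let f1 := (x + y) ^ 2
    let f2 := x + y
    let f3 : MvPolynomial (Fin 2) ℝ := 1
    (∀ d, 0 ≤ MvPolynomial.coeff d (f1 ^ 2 - f0 * f2)) ∧
    (∀ d, 0 ≤ MvPolynomial.coeff d (f2 ^ 2 - f1 * f3)) ∧
    f1 * f2 - f0 * f3 = x ^ 3 - x ^ 2 * y + C 3 * x * y ^ 2 + y ^ 3 ∧
    ¬ (∀ d, 0 ≤ MvPolynomial.coeff d (f1 * f2 - f0 * f3)) := by
  intro x y f0 f1 f2 f3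
  have hC4 : (C 4 : MvPolynomial (Fin 2) ℝ) = 4 := by exact map_ofNat C _
  have hC3 : (C 3 : MvPolynomial (Fin 2) ℝ) = 3 := by exact map_ofNat C _
  have hC2 : (C 2 : MvPolynomial (Fin 2) ℝ) = 2 := by exact map_ofNat C _
  refine ⟨?_, ?_, ?_, ?_⟩
  · intro d
    have h : f1 ^ 2 - f0 * f2 =
        x ^ 4 + C 2 * (x ^ 2 * y ^ 2) + C 4 * (x * y ^ 3) + y ^ 4 := by
      show ((X 0 + X 1 : MvPolynomial (Fin 2) ℝ) ^ 2) ^ 2 - (C 4 * X 0 ^ 2 * X 1) * (X 0 + X 1)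
          = _
      rw [hC4, hC2]; ring
    rw [h]
    simp only [X_pow_eq_monomial, X, x, y, monomial_mul, monomial_pow, C_mul_monomial,
      coeff_add, coeff_monomial, one_pow, mul_one, one_mul]
    split_ifs <;> norm_num
  · intro d
    have h : f2 ^ 2 - f1 * f3 = 0 := by
      show (X 0 + X 1 : MvPolynomial (Fin 2) ℝ) ^ 2 - (X 0 + X 1) ^ 2 * 1 = 0
      ring
    rw [h]
    simp
  · show (X 0 + X 1 : MvPolynomial (Fin 2) ℝ) ^ 2 * (X 0 + X 1) - (C 4 * X 0 ^ 2 * X 1) * 1 = _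
    rw [hC4, hC3]; ring
  · intro hcontra
    have := hcontra (Finsupp.single 0 2 + Finsupp.single 1 1)
    have h : f1 * f2 - f0 * f3 = x ^ 3 - x ^ 2 * y + C 3 * x * y ^ 2 + y ^ 3 := by
      show (X 0 + X 1 : MvPolynomial (Fin 2) ℝ) ^ 2 * (X 0 + X 1) - (C 4 * X 0 ^ 2 * X 1) * 1 = _
      rw [hC4, hC3]; ring
    rw [h] at this
    have hc : coeff (Finsupp.single 0 2 + Finsupp.single 1 1)
        ((X 0 : MvPolynomial (Fin 2) ℝ) ^ 3 - (X 0) ^ 2 * X 1 + C 3 * X 0 * (X 1) ^ 2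
          + (X 1) ^ 3) = -1 := by
      simp [X_pow_eq_monomial, X, monomial_mul, monomial_pow, coeff_monomial,
        Finsupp.single_add, C_mul_monomial, Finsupp.ext_iff, Fin.forall_fin_two,
        Finsupp.smul_single]
    rw [hc] at this
    linarith
end
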